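/- arXiv:1810.04286 — 5 statements merged into one kernel-verified Lean document; each statement's English description precedes it below -/
import Mathlib

section
/- For every u ∈ [0,1), the random variable Z^u = 1{U ≤ u}·(Δ + (1−Δ)·(u−U)/(1−U)) satisfies E[Z^u] = u. In other words, under the null hypothesis the estimator F̃(u) = (1/n)·Σᵢ 1{Uᵢ ≤ u}(Δᵢ + (1−Δᵢ)(u−Uᵢ)/(1−Uᵢ)) is an unbiased estimator of the uniform cumulative distribution function on (0,1). -/
open MeasureTheory ProbabilityTheory

/-- Under the null hypothesis of independent right censoring
(`X` has continuous cdf `F₀`, `C` independent of `X`, `T = min(X,C)`,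
`Δ = 1{X ≤ C}`, `U = F₀(T)`), for every `u ∈ [0,1)` the random variable
`Z^u = 1{U ≤ u}·(Δ + (1−Δ)·(u−U)/(1−U))` satisfies `E[Z^u] = u`; hence the
estimator `F̃` is an unbiased estimator of the uniform cdf on `(0,1)`. -/
theorem censored_estimator_unbiased
    {Ω : Type*} [MeasurableSpace Ω] (P : Measure Ω) [IsProbabilityMeasure P]
    (X C : Ω → ℝ) (hX : Measurable X) (hC : Measurable C)
    (hXC : IndepFun X C P)
    (F₀ : ℝ → ℝ) (hF₀c : Continuous F₀)
    (hF₀ : ∀ t : ℝ, F₀ t = (P {ω | X ω ≤ t}).toReal)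
    (u : ℝ) (hu : u ∈ Set.Ico (0 : ℝ) 1) :
    ∫ ω, (if F₀ (min (X ω) (C ω)) ≤ u then
        (if X ω ≤ C ω then (1 : ℝ) else 0)
          + (1 - (if X ω ≤ C ω then (1 : ℝ) else 0))
            * ((u - F₀ (min (X ω) (C ω))) / (1 - F₀ (min (X ω) (C ω))))
      else 0) ∂P = u := by
  obtain ⟨hu0, hu1⟩ := hu
  set ν := P.map X with hν
  haveI : IsProbabilityMeasure ν := Measure.isProbabilityMeasure_map hX.aemeasurable
  have hIic : ∀ t, ν (Set.Iic t) = P {ω | X ω ≤ t} := by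
    intro t
    rw [hν, Measure.map_apply hX measurableSet_Iic]
    rfl
  have hF₀' : ∀ t, F₀ t = (ν (Set.Iic t)).toReal := by
    intro t; rw [hIic, ← hF₀]
  have hmono : Monotone F₀ := by
    intro s t hst
    rw [hF₀' s, hF₀' t]
    exact ENNReal.toReal_mono (measure_ne_top _ _)
      (measure_mono (Set.Iic_subset_Iic.mpr hst))
  have hF0nonneg : ∀ t, 0 ≤ F₀ t := fun t => by rw [hF₀' t]; exact ENNReal.toReal_nonneg
  have hF0le1 : ∀ t, F₀ t ≤ 1 := by
    intro t; rw [hF₀' t]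
    refine le_trans (ENNReal.toReal_mono ENNReal.one_ne_top prob_le_one) (by simp)
  set A : Set ℝ := {x | F₀ x ≤ u} with hA
  have hAmeas : MeasurableSet A := (isClosed_le hF₀c continuous_const).measurableSet
  have hIoi : ∀ c : ℝ, (ν (Set.Ioi c)).toReal = 1 - F₀ c := by
    intro c
    have h1 : ν (Set.Ioi c) = 1 - ν (Set.Iic c) := by
      rw [← Set.compl_Iic, measure_compl measurableSet_Iic (measure_ne_top _ _)]
      simp
    rw [h1, ENNReal.toReal_sub_of_le prob_le_one ENNReal.one_ne_top, ENNReal.toReal_one, hF₀' c]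
  have hkey : ∀ c : ℝ, (ν (A ∩ Set.Iic c)).toReal = min (F₀ c) u := by
    intro c
    by_cases hc : F₀ c ≤ u
    · have : A ∩ Set.Iic c = Set.Iic c := by
        apply Set.inter_eq_self_of_subset_right
        intro x hx
        exact le_trans (hmono hx) hc
      rw [this, ← hF₀' c, min_eq_left hc]
    · push_neg at hc
      have hAsub : A ⊆ Set.Iic c := by
        intro x hx
        by_contra hxc
        simp only [Set.mem_Iic, not_le] at hxc
        exact absurd (le_trans (hmono hxc.le) hx) (not_le.mpr hc)
      have hAI : A ∩ Set.Iic c = A := Set.inter_eq_self_of_subset_left hAsub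
      rw [hAI, min_eq_right hc.le]
      rcases Set.eq_empty_or_nonempty A with hAe | hAne
      · have hlt : ∀ t, u < F₀ t := by
          intro t
          by_contra h
          push_neg at h
          exact Set.eq_empty_iff_forall_notMem.mp hAe t h
        have hemp : (⋂ n : ℕ, Set.Iic (-(n:ℝ))) = ∅ := by
          ext x
          simp only [Set.mem_iInter, Set.mem_Iic, Set.mem_empty_iff_false, iff_false, not_forall,
            not_le]
          obtain ⟨n, hn⟩ := exists_nat_gt (-x)
          exact ⟨n, by linarith⟩
        have htend : Filter.Tendsto (fun n : ℕ => ν (Set.Iic (-(n:ℝ)))) Filter.atTop (nhds 0) := by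
          have := tendsto_measure_iInter_atTop (μ := ν) (s := fun n : ℕ => Set.Iic (-(n:ℝ)))
            (fun n => measurableSet_Iic.nullMeasurableSet)
            (fun n m hnm => Set.Iic_subset_Iic.mpr (neg_le_neg (by exact_mod_cast hnm)))
            ⟨0, measure_ne_top _ _⟩
          rw [hemp] at this
          simpa [Function.comp_def] using this
        rw [hAe]
        simp only [measure_empty, ENNReal.toReal_zero]
        by_contra hne
        have hu0' : (0:ℝ) < u := lt_of_le_of_ne hu0 (fun h => hne h)
        obtain ⟨n, hn⟩ := (htend.eventually_lt_const
          (ENNReal.ofReal_pos.mpr hu0')).exists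
        have : F₀ (-(n:ℝ)) < u := by
          rw [hF₀' (-(n:ℝ))]
          exact ENNReal.toReal_lt_of_lt_ofReal hn
        exact absurd this (not_lt.mpr (hlt _).le)
      · -- A nonempty: bounded above, closed, sSup A ∈ A, A = Iic (sSup A), F₀ (sSup A) = u
        have hclosed : IsClosed A := isClosed_le hF₀c continuous_const
        have hbdd : BddAbove A := ⟨c, hAsub⟩
        have hmem : sSup A ∈ A := hclosed.csSup_mem hAne hbdd
        have hAIic : A = Set.Iic (sSup A) := by
          apply Set.Subset.antisymm
          · exact fun x hx => le_csSup hbdd hx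
          · exact fun x hx => le_trans (hmono hx) hmem
        have hFs : F₀ (sSup A) = u := by
          refine le_antisymm hmem ?_
          by_contra h
          push_neg at h
          have hev : ∀ᶠ x in nhdsWithin (sSup A) (Set.Ioi (sSup A)), F₀ x < u :=
            Filter.Eventually.filter_mono nhdsWithin_le_nhds
              ((hF₀c.continuousAt).eventually_lt_const h)
          obtain ⟨x, hxlt, hxmem⟩ :=
            (hev.and self_mem_nhdsWithin).exists
          exact absurd (le_csSup hbdd (show x ∈ A from hxlt.le)) (not_le.mpr hxmem)
        rw [hAIic, ← hF₀' (sSup A), hFs]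
  -- the integrand as a function on pairs (c, x)
  set μC := P.map C with hμC
  haveI : IsProbabilityMeasure μC := Measure.isProbabilityMeasure_map hC.aemeasurable
  set g2 : ℝ × ℝ → ℝ := fun p => if F₀ (min p.2 p.1) ≤ u then
        (if p.2 ≤ p.1 then (1 : ℝ) else 0)
          + (1 - (if p.2 ≤ p.1 then (1 : ℝ) else 0))
            * ((u - F₀ (min p.2 p.1)) / (1 - F₀ (min p.2 p.1)))
      else 0 with hg2
  have hFm : Measurable fun p : ℝ × ℝ => F₀ (min p.2 p.1) :=
    hF₀c.measurable.comp (measurable_snd.min measurable_fst)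
  have hg2m : Measurable g2 := by
    apply Measurable.ite (measurableSet_le hFm measurable_const)
    · apply Measurable.add
      · exact Measurable.ite (measurableSet_le measurable_snd measurable_fst)
          measurable_const measurable_const
      · exact ((measurable_const.sub (Measurable.ite
          (measurableSet_le measurable_snd measurable_fst)
          measurable_const measurable_const)).mul
          ((measurable_const.sub hFm).div (measurable_const.sub hFm)))
    · exact measurable_const
  have hratio : ∀ t : ℝ, F₀ t ≤ u → (u - F₀ t) / (1 - F₀ t) ∈ Set.Icc (0:ℝ) 1 := by
    intro t ht
    have h1 : (0:ℝ) < 1 - F₀ t := by linarith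
    constructor
    · exact div_nonneg (by linarith) h1.le
    · rw [div_le_one h1]; linarith
  have hbound : ∀ p : ℝ × ℝ, ‖g2 p‖ ≤ 1 := by
    intro p
    rw [hg2]
    simp only []
    by_cases h1 : F₀ (min p.2 p.1) ≤ u
    · rw [if_pos h1]
      obtain ⟨hr0, hr1⟩ := hratio _ h1
      by_cases h2 : p.2 ≤ p.1
      · rw [if_pos h2]
        rw [Real.norm_eq_abs, abs_le]
        constructor <;> nlinarith
      · rw [if_neg h2]
        rw [Real.norm_eq_abs, abs_le]
        constructor <;> nlinarith
    · rw [if_neg h1]; simp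
  have hint : Integrable g2 (μC.prod ν) :=
    ⟨hg2m.aestronglyMeasurable,
      HasFiniteIntegral.of_bounded (C := 1) (Filter.Eventually.of_forall hbound)⟩
  have hmapCX : P.map (fun ω => (C ω, X ω)) = μC.prod ν :=
    (indepFun_iff_map_prod_eq_prod_map_map hC.aemeasurable hX.aemeasurable).mp hXC.symm
  -- inner integral
  set r : ℝ → ℝ := fun c => if F₀ c ≤ u then (u - F₀ c) / (1 - F₀ c) else 0 with hr
  have hinner : ∀ c : ℝ, ∫ x, g2 (c, x) ∂ν = u := by
    intro c
    have hsplit : (fun x => g2 (c, x)) = fun x =>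
        Set.indicator (A ∩ Set.Iic c) (fun _ => (1:ℝ)) x
          + Set.indicator (Set.Ioi c) (fun _ => r c) x := by
      funext x
      rw [hg2, hr]
      simp only []
      by_cases hxc : x ≤ c
      · rw [min_eq_left hxc, if_pos hxc]
        have hIoi0 : Set.indicator (Set.Ioi c) (fun _ => if F₀ c ≤ u then (u - F₀ c) / (1 - F₀ c) else 0) x = 0 :=
          Set.indicator_of_notMem (by simpa using hxc) _
        by_cases hfx : F₀ x ≤ u
        · rw [if_pos hfx, hIoi0,
            Set.indicator_of_mem (Set.mem_inter (by exact hfx) (Set.mem_Iic.mpr hxc))]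
          ring
        · rw [if_neg hfx, hIoi0,
            Set.indicator_of_notMem (fun hmem => hfx hmem.1)]
          ring
      · push_neg at hxc
        rw [min_eq_right hxc.le, if_neg (not_le.mpr hxc)]
        have hAI0 : Set.indicator (A ∩ Set.Iic c) (fun _ => (1:ℝ)) x = 0 :=
          Set.indicator_of_notMem (fun hmem => absurd hmem.2 (not_le.mpr hxc)) _
        rw [hAI0, Set.indicator_of_mem (Set.mem_Ioi.mpr hxc)]
        by_cases hfc : F₀ c ≤ u
        · simp only [if_pos hfc]; ring
        · simp only [if_neg hfc]; ring
    rw [hsplit]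
    rw [integral_add
      ((integrable_const (1:ℝ)).indicator (hAmeas.inter measurableSet_Iic))
      ((integrable_const (r c)).indicator measurableSet_Ioi)]
    rw [integral_indicator_const (1:ℝ) (hAmeas.inter measurableSet_Iic),
      integral_indicator_const (r c) measurableSet_Ioi]
    rw [smul_eq_mul, smul_eq_mul, measureReal_def, measureReal_def, hkey c, hIoi c]
    simp only [hr]
    by_cases hfc : F₀ c ≤ u
    · rw [min_eq_left hfc, if_pos hfc]
      have h1 : (1:ℝ) - F₀ c ≠ 0 := by
        have := lt_of_le_of_lt hfc hu1; intro h; linarith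
      field_simp
      ring
    · rw [min_eq_right (le_of_not_ge hfc), if_neg hfc]
      ring
  -- put it together
  calc ∫ ω, (if F₀ (min (X ω) (C ω)) ≤ u then
        (if X ω ≤ C ω then (1 : ℝ) else 0)
          + (1 - (if X ω ≤ C ω then (1 : ℝ) else 0))
            * ((u - F₀ (min (X ω) (C ω))) / (1 - F₀ (min (X ω) (C ω))))
      else 0) ∂P
      = ∫ ω, g2 (C ω, X ω) ∂P := rfl
    _ = ∫ p, g2 p ∂(P.map (fun ω => (C ω, X ω))) :=
        (integral_map (hC.prodMk hX).aemeasurable hg2m.aestronglyMeasurable).symm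
    _ = ∫ p, g2 p ∂(μC.prod ν) := by rw [hmapCX]
    _ = ∫ c, ∫ x, g2 (c, x) ∂ν ∂μC := integral_prod g2 hint
    _ = ∫ _, u ∂μC := by
        apply integral_congr_ae
        exact Filter.Eventually.of_forall hinner
    _ = u := by simp
end

section
/- The mean measure of the random probability measure α_{U,Δ} is Lebesgue measure on [0,1]: for every bounded measurable function ψ : [0,1] → ℝ, E[∫ ψ dα_{U,Δ}] = ∫₀¹ ψ(y) dy. -/
open MeasureTheory ProbabilityTheory
set_option linter.unusedSectionVars false
section Helpers
open Set Filter Topology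

set_option linter.unusedSectionVars false

lemma sublevel_eq_Iic {F : ℝ → ℝ} (hF : Continuous F) (hmono : Monotone F) {u : ℝ}
    (hne : {x | F x ≤ u}.Nonempty) (hbdd : BddAbove {x | F x ≤ u}) :
    ∃ d, {x | F x ≤ u} = Iic d ∧ F d = u := by
  set S := {x | F x ≤ u} with hS
  have hclosed : IsClosed S := isClosed_le hF continuous_const
  have hdmem : sSup S ∈ S := hclosed.csSup_mem hne hbdd
  refine ⟨sSup S, ?_, ?_⟩
  · ext x
    constructor
    · intro hx; exact le_csSup hbdd hx
    · intro hx; exact le_trans (hmono hx) hdmem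
  · refine le_antisymm hdmem ?_
    have htend : Tendsto F (𝓝[>] (sSup S)) (𝓝 (F (sSup S))) :=
      (hF.tendsto _).mono_left nhdsWithin_le_nhds
    refine ge_of_tendsto htend ?_
    filter_upwards [self_mem_nhdsWithin] with x hx
    by_contra hlt
    push_neg at hlt
    exact absurd (le_csSup hbdd hlt.le) (not_le.mpr hx)

section
variable {μ : Measure ℝ} [IsProbabilityMeasure μ] {F : ℝ → ℝ}
  (hF : Continuous F) (hFeq : ∀ t, F t = (μ (Iic t)).toReal)

include hFeq in
lemma F_Iic : ∀ t, μ (Iic t) = ENNReal.ofReal (F t) := by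
  intro t
  rw [hFeq t, ENNReal.ofReal_toReal (measure_ne_top μ _)]

include hFeq in
lemma F_mono : Monotone F := by
  intro a b hab
  rw [hFeq, hFeq]
  exact ENNReal.toReal_mono (measure_ne_top μ _) (measure_mono (Iic_subset_Iic.mpr hab))

include hFeq in
lemma F_nonneg : ∀ t, 0 ≤ F t := fun t => (hFeq t) ▸ ENNReal.toReal_nonneg

include hFeq in
lemma F_le_one : ∀ t, F t ≤ 1 := by
  intro t
  rw [hFeq t]
  exact ENNReal.toReal_le_of_le_ofReal one_pos.le (by simpa using prob_le_one)

include hF hFeq in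
lemma F_tendsto_atTop : Tendsto F atTop (𝓝 1) := by
  have : F = ProbabilityTheory.cdf μ := by
    ext t; rw [hFeq t, ProbabilityTheory.cdf_eq_real, Measure.real]
  rw [this]; exact ProbabilityTheory.tendsto_cdf_atTop μ

include hF hFeq in
lemma F_tendsto_atBot : Tendsto F atBot (𝓝 0) := by
  have : F = ProbabilityTheory.cdf μ := by
    ext t; rw [hFeq t, ProbabilityTheory.cdf_eq_real, Measure.real]
  rw [this]; exact ProbabilityTheory.tendsto_cdf_atBot μ

include hF hFeq in
lemma F_bddAbove {u : ℝ} (hu : u < 1) : BddAbove {x | F x ≤ u} := by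
  have : ∀ᶠ x in atTop, u < F x := (F_tendsto_atTop hF hFeq).eventually_const_lt hu
  obtain ⟨x₁, hx₁⟩ := this.exists
  refine ⟨x₁, fun x hx => ?_⟩
  by_contra hlt
  push_neg at hlt
  exact absurd (le_trans (F_mono hFeq hlt.le) hx) (not_le.mpr hx₁)

include hF hFeq in
lemma measure_sublevel {u : ℝ} (h0 : 0 ≤ u) (h1 : u < 1) :
    μ {x | F x ≤ u} = ENNReal.ofReal u := by
  rcases Set.eq_empty_or_nonempty {x | F x ≤ u} with he | hne
  · rw [he, measure_empty]
    -- u must be 0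
    rcases eq_or_lt_of_le h0 with h | h
    · simp [← h]
    · exfalso
      have : ∀ᶠ x in atBot, F x < u := (F_tendsto_atBot hF hFeq).eventually_lt_const h
      obtain ⟨x, hx⟩ := this.exists
      have hmem : x ∈ {x | F x ≤ u} := hx.le
      simp [he] at hmem
  · obtain ⟨d, hSd, hFd⟩ := sublevel_eq_Iic hF (F_mono hFeq) hne (F_bddAbove hF hFeq h1)
    rw [hSd, F_Iic hFeq, hFd]

include hF hFeq in
lemma measure_sublevel_top {u : ℝ} (h1 : 1 ≤ u) : μ {x | F x ≤ u} = 1 := by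
  have : {x | F x ≤ u} = univ := eq_univ_of_forall fun x => le_trans (F_le_one hFeq x) h1
  rw [this, measure_univ]

include hF hFeq in
lemma map_F_eq : Measure.map F μ = volume.restrict (Icc (0:ℝ) 1) := by
  haveI : IsProbabilityMeasure (Measure.map F μ) :=
    Measure.isProbabilityMeasure_map hF.measurable.aemeasurable
  refine Measure.ext_of_Iic _ _ (fun a => ?_)
  rw [Measure.map_apply hF.measurable measurableSet_Iic,
    Measure.restrict_apply' measurableSet_Icc]
  rcases lt_or_ge a 0 with ha | ha
  · have h1 : (F ⁻¹' Iic a) = ∅ := by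
      ext x; simp only [mem_preimage, mem_Iic, mem_empty_iff_false, iff_false, not_le]
      exact lt_of_lt_of_le ha (F_nonneg hFeq x)
    have h2 : Iic a ∩ Icc (0:ℝ) 1 = ∅ := by
      ext x; simp only [mem_inter_iff, mem_Iic, mem_Icc, mem_empty_iff_false, iff_false]
      rintro ⟨hx, hx0, -⟩; exact absurd (le_trans hx0 hx) (not_le.mpr ha)
    rw [h1, h2]; simp
  rcases lt_or_ge a 1 with ha1 | ha1
  · have h2 : Iic a ∩ Icc (0:ℝ) 1 = Icc 0 a := by
      ext x
      simp only [mem_inter_iff, mem_Iic, mem_Icc]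
      exact ⟨fun ⟨hx, hx0, _⟩ => ⟨hx0, hx⟩, fun ⟨hx0, hx⟩ => ⟨hx, hx0, hx.trans ha1.le⟩⟩
    rw [h2, Real.volume_Icc, sub_zero]
    exact measure_sublevel hF hFeq ha ha1
  · have h2 : Iic a ∩ Icc (0:ℝ) 1 = Icc 0 1 := by
      rw [inter_eq_right]
      exact fun x hx => le_trans hx.2 ha1
    rw [h2, Real.volume_Icc, sub_zero, ENNReal.ofReal_one]
    exact measure_sublevel_top hF hFeq ha1

include hF hFeq in
lemma null_between {c : ℝ} : μ {x | F x ≤ F c ∧ c < x} = 0 := by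
  rcases lt_or_ge (F c) 1 with h1 | h1
  · obtain ⟨d, hSd, hFd⟩ := sublevel_eq_Iic hF (F_mono hFeq) ⟨c, (le_refl (F c) : c ∈ {x | F x ≤ F c})⟩
      (F_bddAbove hF hFeq h1)
    have hsub : {x | F x ≤ F c ∧ c < x} ⊆ Ioc c d := by
      rintro x ⟨hx1, hx2⟩
      have hxd : x ∈ Iic d := hSd ▸ (mem_setOf.mpr hx1)
      exact ⟨hx2, hxd⟩
    refine measure_mono_null hsub ?_
    have hcd : c ≤ d := by
      have : c ∈ Iic d := hSd ▸ (le_refl (F c) : c ∈ {x | F x ≤ F c})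
      exact this
    have : μ (Iic c) + μ (Ioc c d) = μ (Iic d) := by
      rw [← measure_union (Iic_disjoint_Ioc le_rfl) measurableSet_Ioc, Iic_union_Ioc_eq_Iic hcd]
    rw [F_Iic hFeq, F_Iic hFeq, hFd] at this
    have h0 : ENNReal.ofReal (F c) + μ (Ioc c d) = ENNReal.ofReal (F c) + 0 := by
      rw [add_zero]; exact this
    exact (ENNReal.add_right_inj ENNReal.ofReal_ne_top).mp h0
  · have hsub : {x | F x ≤ F c ∧ c < x} ⊆ Ioi c := fun x hx => hx.2
    refine measure_mono_null hsub ?_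
    have : μ (Ioi c) = 1 - μ (Iic c) := by
      rw [← Set.compl_Iic]; exact prob_compl_eq_one_sub measurableSet_Iic
    rw [this, F_Iic hFeq]
    have : ENNReal.ofReal (F c) = 1 := by
      rw [le_antisymm (F_le_one hFeq c) h1, ENNReal.ofReal_one]
    rw [this, tsub_self]

end

end Helpers

open Set Filter Topology

/-- The random probability measure `α_{u,δ}` on `[0,1]`: a Dirac point mass at `u`
when `δ = 1` (uncensored), and the uniform distribution on `(u,1)` when `δ = 0`. -/
noncomputable def alphaMeas (u : ℝ) (δ : Bool) : Measure ℝ :=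
  if δ then Measure.dirac u
  else ENNReal.ofReal (1 / (1 - u)) • volume.restrict (Set.Ioo u 1)

/-- Under the null hypothesis of independent right censoring,
the mean measure of the random probability measure `α_{U,Δ}` is Lebesgue measure
on `[0,1]`: for every bounded measurable `ψ : [0,1] → ℝ`,
`E[∫ ψ dα_{U,Δ}] = ∫₀¹ ψ(y) dy`. -/
theorem mean_measure_alpha_eq_lebesgue
    {Ω : Type*} [MeasurableSpace Ω] (P : Measure Ω) [IsProbabilityMeasure P]
    (X C : Ω → ℝ) (hX : Measurable X) (hC : Measurable C)
    (hXC : IndepFun X C P)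
    (F₀ : ℝ → ℝ) (hF₀c : Continuous F₀)
    (hF₀ : ∀ t : ℝ, F₀ t = (P {ω | X ω ≤ t}).toReal)
    (ψ : ℝ → ℝ) (hψ : Measurable ψ) (hψb : ∃ B : ℝ, ∀ x, |ψ x| ≤ B) :
    ∫ ω, (∫ x, ψ x ∂(alphaMeas (F₀ (min (X ω) (C ω))) (decide (X ω ≤ C ω)))) ∂P
      = ∫ y in Set.Icc (0 : ℝ) 1, ψ y := by
  obtain ⟨B, hB⟩ := hψb
  have hB0 : 0 ≤ B := le_trans (abs_nonneg _) (hB 0)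
  set μX := P.map X with hμX
  set μC := P.map C with hμC
  haveI : IsProbabilityMeasure μX := Measure.isProbabilityMeasure_map hX.aemeasurable
  haveI : IsProbabilityMeasure μC := Measure.isProbabilityMeasure_map hC.aemeasurable
  have hFeq : ∀ t, F₀ t = (μX (Iic t)).toReal := by
    intro t
    rw [hF₀ t, hμX, Measure.map_apply hX measurableSet_Iic]
    rfl
  have hu0 : ∀ t, 0 ≤ F₀ t := F_nonneg hFeq
  have hu1 : ∀ t, F₀ t ≤ 1 := F_le_one hFeq
  -- interval integrability of ψ
  have hψint : ∀ a b : ℝ, IntervalIntegrable ψ volume a b := by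
    intro a b
    rw [intervalIntegrable_iff]
    haveI : IsFiniteMeasure (volume.restrict (Set.uIoc a b)) := ⟨by
      rw [Measure.restrict_apply_univ, Set.uIoc, Real.volume_Ioc]
      exact ENNReal.ofReal_lt_top⟩
    exact ⟨hψ.aestronglyMeasurable.restrict,
      HasFiniteIntegral.of_bounded (C := B) (ae_of_all _ fun x => by
        rw [Real.norm_eq_abs]; exact hB x)⟩
  have hIcc01 : IntegrableOn ψ (Icc (0:ℝ) 1) volume := by
    haveI : IsFiniteMeasure (volume.restrict (Icc (0:ℝ) 1)) := ⟨by
      rw [Measure.restrict_apply_univ, Real.volume_Icc]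
      exact ENNReal.ofReal_lt_top⟩
    exact ⟨hψ.aestronglyMeasurable.restrict,
      HasFiniteIntegral.of_bounded (C := B) (ae_of_all _ fun x => by
        rw [Real.norm_eq_abs]; exact hB x)⟩
  set I : ℝ → ℝ := fun u => ∫ t in u..1, ψ t with hI
  set G : ℝ → ℝ := fun u => (1 / (1 - u)) * I u with hG
  have hIcont : Continuous I := by
    have h1 : Continuous fun u => ∫ t in (0:ℝ)..u, ψ t :=
      intervalIntegral.continuous_primitive hψint 0
    have h2 : ∀ u, I u = (∫ t in (0:ℝ)..1, ψ t) - ∫ t in (0:ℝ)..u, ψ t := by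
      intro u
      rw [intervalIntegral.integral_interval_sub_left (hψint 0 1) (hψint 0 u)]
    rw [funext h2]
    exact continuous_const.sub h1
  have hGmeas : Measurable G := by
    have hm : Measurable fun u : ℝ => 1 / (1 - u) := by
      simp only [one_div]
      exact (measurable_const.sub measurable_id).inv
    exact hm.mul hIcont.measurable
  have hGb : ∀ u, 0 ≤ u → u ≤ 1 → |G u| ≤ B := by
    intro u h0 h1
    rcases eq_or_lt_of_le h1 with h | h
    · simp only [hG, hI, h, intervalIntegral.integral_same, mul_zero, abs_zero]
      exact hB0
    · have h1u : (0:ℝ) < 1 - u := by linarith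
      have hInorm : |I u| ≤ B * (1 - u) := by
        have hn := intervalIntegral.norm_integral_le_of_norm_le_const
          (a := u) (b := 1) (C := B) (f := ψ) (fun x _ => by rw [Real.norm_eq_abs]; exact hB x)
        rwa [Real.norm_eq_abs, abs_of_nonneg h1u.le] at hn
      have hd : (0:ℝ) ≤ 1 / (1 - u) := by positivity
      calc |G u| = (1 / (1 - u)) * |I u| := by rw [hG, abs_mul, abs_of_nonneg hd]
        _ ≤ (1 / (1 - u)) * (B * (1 - u)) := mul_le_mul_of_nonneg_left hInorm hd
        _ = B := by field_simp
  -- pointwise identification of the inner integral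
  have hpt : ∀ ω, (∫ x, ψ x ∂(alphaMeas (F₀ (min (X ω) (C ω))) (decide (X ω ≤ C ω))))
      = if X ω ≤ C ω then ψ (F₀ (X ω)) else G (F₀ (C ω)) := by
    intro ω
    by_cases h : X ω ≤ C ω
    · rw [if_pos h, min_eq_left h, decide_eq_true h]
      simp only [alphaMeas, if_true]
      exact integral_dirac' ψ _ hψ.stronglyMeasurable
    · rw [if_neg h, min_eq_right (le_of_not_ge h), decide_eq_false h]
      have hle := hu1 (C ω)
      have hd : (0:ℝ) ≤ 1 / (1 - F₀ (C ω)) := by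
        apply one_div_nonneg.mpr; linarith
      simp only [alphaMeas, Bool.false_eq_true, if_false]
      rw [integral_smul_measure, ENNReal.toReal_ofReal hd, smul_eq_mul, hG]
      dsimp only
      congr 1
      rw [hI]
      dsimp only
      rw [intervalIntegral.integral_of_le hle, integral_Ioc_eq_integral_Ioo]
  set g : ℝ × ℝ → ℝ := fun p => if p.1 ≤ p.2 then ψ (F₀ p.1) else G (F₀ p.2) with hgdef
  have hgmeas : Measurable g :=
    Measurable.ite (measurableSet_le measurable_fst measurable_snd)
      (hψ.comp (hF₀c.measurable.comp measurable_fst))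
      (hGmeas.comp (hF₀c.measurable.comp measurable_snd))
  have hgbd : ∀ p : ℝ × ℝ, ‖g p‖ ≤ B := by
    intro p
    rw [Real.norm_eq_abs, hgdef]
    dsimp only
    split_ifs
    · exact hB _
    · exact hGb _ (hu0 _) (hu1 _)
  have hgint : Integrable g (μX.prod μC) :=
    ⟨hgmeas.aestronglyMeasurable, HasFiniteIntegral.of_bounded (ae_of_all _ hgbd)⟩
  -- inner integral over x, for fixed c
  have hinner : ∀ c : ℝ, (∫ x, g (x, c) ∂μX) = ∫ y in Set.Icc (0:ℝ) 1, ψ y := by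
    intro c
    have hint : Integrable (fun x => g (x, c)) μX :=
      ⟨(hgmeas.comp (measurable_id.prodMk measurable_const)).aestronglyMeasurable,
        HasFiniteIntegral.of_bounded (ae_of_all _ fun x => hgbd (x, c))⟩
    rw [← integral_add_compl (measurableSet_Iic (a := c)) hint]
    have e1 : ∫ x in Iic c, g (x, c) ∂μX = ∫ x in Iic c, ψ (F₀ x) ∂μX :=
      setIntegral_congr_fun measurableSet_Iic (fun x hx => by
        simp only [hgdef]; exact if_pos hx)
    have e2 : ∫ x in (Iic c)ᶜ, g (x, c) ∂μX = ∫ _x in Ioi c, G (F₀ c) ∂μX := by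
      rw [Set.compl_Iic]
      exact setIntegral_congr_fun measurableSet_Ioi (fun x hx => by
        simp only [hgdef]; exact if_neg (not_le.mpr hx))
    rw [e1, e2, setIntegral_const, Measure.real]
    have key1 : ∫ x in Iic c, ψ (F₀ x) ∂μX = ∫ y in Icc 0 (F₀ c), ψ y := by
      rw [← integral_indicator measurableSet_Iic]
      have hae : (Iic c).indicator (fun x => ψ (F₀ x)) =ᵐ[μX]
          fun x => (Iic (F₀ c)).indicator ψ (F₀ x) := by
        have hnull := null_between hF₀c hFeq (c := c)
        rw [Filter.EventuallyEq, ae_iff]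
        refine measure_mono_null (fun x hx => ?_) hnull
        simp only [Set.mem_setOf_eq] at hx ⊢
        by_cases hxc : x ≤ c
        · refine absurd ?_ hx
          have h1 : F₀ x ≤ F₀ c := F_mono hFeq hxc
          simp only [Set.indicator_apply, Set.mem_Iic, if_pos hxc, if_pos h1]
        · refine ⟨?_, not_le.mp hxc⟩
          by_contra hgt
          refine hx ?_
          simp only [Set.indicator_apply, Set.mem_Iic, if_neg hxc, if_neg hgt]
      rw [integral_congr_ae hae,
        ← integral_map hF₀c.measurable.aemeasurable
          ((hψ.indicator measurableSet_Iic).aestronglyMeasurable),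
        map_F_eq hF₀c hFeq, integral_indicator measurableSet_Iic,
        Measure.restrict_restrict measurableSet_Iic]
      have hset : Iic (F₀ c) ∩ Icc (0:ℝ) 1 = Icc 0 (F₀ c) := by
        ext x
        simp only [Set.mem_inter_iff, Set.mem_Iic, Set.mem_Icc]
        exact ⟨fun ⟨h1, h2, _⟩ => ⟨h2, h1⟩, fun ⟨h1, h2⟩ => ⟨h2, h1, h2.trans (hu1 c)⟩⟩
      rw [hset]
    have key2 : (μX (Ioi c)).toReal • G (F₀ c) = ∫ y in Ioc (F₀ c) 1, ψ y := by
      have hμIoi : (μX (Ioi c)).toReal = 1 - F₀ c := by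
        rw [← Set.compl_Iic, prob_compl_eq_one_sub measurableSet_Iic, F_Iic hFeq,
          ENNReal.toReal_sub_of_le (ENNReal.ofReal_le_one.mpr (hu1 c)) ENNReal.one_ne_top,
          ENNReal.toReal_one, ENNReal.toReal_ofReal (hu0 c)]
      rw [hμIoi, smul_eq_mul]
      rcases eq_or_lt_of_le (hu1 c) with h | h
      · rw [← h]
        simp [Set.Ioc_self]
      · have h1u : (0:ℝ) < 1 - F₀ c := by linarith
        rw [hG]
        dsimp only
        rw [← mul_assoc, mul_one_div, div_self h1u.ne', one_mul, hI]
        dsimp only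
        rw [intervalIntegral.integral_of_le (hu1 c)]
    have hdisj : Disjoint (Icc (0:ℝ) (F₀ c)) (Ioc (F₀ c) 1) :=
      (Iic_disjoint_Ioc le_rfl).mono Icc_subset_Iic_self le_rfl
    rw [key1, key2, ← setIntegral_union hdisj measurableSet_Ioc
      (hIcc01.mono_set (Icc_subset_Icc le_rfl (hu1 c)))
      (hIcc01.mono_set (fun x hx => ⟨(hu0 c).trans hx.1.le, hx.2⟩)),
      Icc_union_Ioc_eq_Icc (hu0 c) (hu1 c)]
  -- assemble
  have step1 : (fun ω => ∫ x, ψ x ∂(alphaMeas (F₀ (min (X ω) (C ω))) (decide (X ω ≤ C ω))))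
      = fun ω => g (X ω, C ω) := funext fun ω => hpt ω
  rw [step1]
  have hmap : P.map (fun ω => (X ω, C ω)) = μX.prod μC :=
    (indepFun_iff_map_prod_eq_prod_map_map hX.aemeasurable hC.aemeasurable).mp hXC
  have step2 : ∫ ω, g (X ω, C ω) ∂P = ∫ p, g p ∂(μX.prod μC) := by
    rw [← hmap, integral_map (hX.prodMk hC).aemeasurable hgmeas.aestronglyMeasurable]
  rw [step2, MeasureTheory.integral_prod_symm g hgint]
  rw [funext hinner, integral_const, probReal_univ, one_smul]
end

section
/- Let V and W be independent random variables with values in [0,1], with continuous cumulative distribution functions F̃ and G̃ respectively satisfying F̃(0) = G̃(0) = 0. Set U = min(V, W) and Δ = 1{V ≤ W}. Then for every u ∈ [0,1), E[1{U ≤ u}·(Δ + (1−Δ)(u−U)/(1−U))] = F̃(u) + ∫_{(0,u]} (1/(1−s))·[(1−s)(1−F̃(u)) − (1−u)(1−F̃(s))] dμ_{G̃}(s), where μ_{G̃} denotes the Lebesgue–Stieltjes measure associated with G̃. In particular, this expectation equals u for all u ∈ [0,1) when F̃ is the uniform distribution function F̃(s) = s. -/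
open MeasureTheory ProbabilityTheory Set Filter

private lemma intBdd {α : Type*} [MeasurableSpace α] (ρ : Measure α) [IsFiniteMeasure ρ]
    {f : α → ℝ} (hf : AEStronglyMeasurable f ρ) (C : ℝ) (h : ∀ᵐ x ∂ρ, |f x| ≤ C) :
    Integrable f ρ :=
  Integrable.mono' (integrable_const C) hf (h.mono fun x hx => by simpa using hx)

private lemma intIte (ρ : Measure ℝ) [IsFiniteMeasure ρ] {s : Set ℝ} (hs : MeasurableSet s)
    (c : ℝ) [DecidablePred (· ∈ s)] :
    ∫ x, (if x ∈ s then c else 0) ∂ρ = (ρ s).toReal * c := by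
  have hx : ∀ x, (if x ∈ s then c else 0) = s.indicator (fun _ => c) x := by
    intro x
    by_cases h : x ∈ s <;> simp [h]
  simp only [hx]
  rw [integral_indicator_const c hs, smul_eq_mul]
  rfl

/-- Let `V` and `W` be independent `[0,1]`-valued random variables
with continuous cdfs `F̃` and `G̃` satisfying `F̃(0) = G̃(0) = 0`; set `U = min(V,W)`
and `Δ = 1{V ≤ W}`.  Then for every `u ∈ [0,1)`,
`E[1{U ≤ u}(Δ + (1−Δ)(u−U)/(1−U))]
  = F̃(u) + ∫_{(0,u]} (1/(1−s))·[(1−s)(1−F̃(u)) − (1−u)(1−F̃(s))] dμ_{G̃}(s)`,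
where `μ_{G̃}` is the Lebesgue–Stieltjes measure of `G̃`.  In particular the
expectation equals `u` when `F̃` is the uniform distribution function on `[0,1]`. -/
theorem expectation_censored_weight_alternative
    {Ω : Type*} [MeasurableSpace Ω] (P : Measure Ω) [IsProbabilityMeasure P]
    (V W : Ω → ℝ) (hV : Measurable V) (hW : Measurable W)
    (hVr : ∀ ω, V ω ∈ Set.Icc (0 : ℝ) 1) (hWr : ∀ ω, W ω ∈ Set.Icc (0 : ℝ) 1)
    (hVW : IndepFun V W P)
    (F G : ℝ → ℝ) (hFc : Continuous F) (hGc : Continuous G)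
    (hF : ∀ t : ℝ, F t = (P {ω | V ω ≤ t}).toReal)
    (hG : ∀ t : ℝ, G t = (P {ω | W ω ≤ t}).toReal)
    (hF0 : F 0 = 0) (hG0 : G 0 = 0)
    (Gs : StieltjesFunction ℝ) (hGs : ∀ t, Gs t = G t)
    (u : ℝ) (hu : u ∈ Set.Ico (0 : ℝ) 1) :
    (∫ ω, (if min (V ω) (W ω) ≤ u then
          (if V ω ≤ W ω then (1 : ℝ) else 0)
            + (1 - (if V ω ≤ W ω then (1 : ℝ) else 0))
              * ((u - min (V ω) (W ω)) / (1 - min (V ω) (W ω)))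
        else 0) ∂P
      = F u + ∫ s in Set.Ioc (0 : ℝ) u,
          (1 / (1 - s)) * ((1 - s) * (1 - F u) - (1 - u) * (1 - F s)) ∂Gs.measure)
    ∧ ((∀ s ∈ Set.Icc (0 : ℝ) 1, F s = s) →
        ∫ ω, (if min (V ω) (W ω) ≤ u then
            (if V ω ≤ W ω then (1 : ℝ) else 0)
              + (1 - (if V ω ≤ W ω then (1 : ℝ) else 0))
                * ((u - min (V ω) (W ω)) / (1 - min (V ω) (W ω)))
          else 0) ∂P = u) := by
  obtain ⟨hu0, hu1⟩ := hu
  set μ : Measure ℝ := P.map V with hμdef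
  set ν : Measure ℝ := P.map W with hνdef
  haveI hμP : IsProbabilityMeasure μ := Measure.isProbabilityMeasure_map hV.aemeasurable
  haveI hνP : IsProbabilityMeasure ν := Measure.isProbabilityMeasure_map hW.aemeasurable
  -- basic cdf facts
  have hFIic : ∀ t, (μ (Iic t)).toReal = F t := by
    intro t
    rw [hμdef, Measure.map_apply hV measurableSet_Iic]
    exact (hF t).symm
  have hGIic : ∀ t, (ν (Iic t)).toReal = G t := by
    intro t
    rw [hνdef, Measure.map_apply hW measurableSet_Iic]
    exact (hG t).symm
  have hF01 : ∀ t, 0 ≤ F t ∧ F t ≤ 1 := by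
    intro t
    rw [hF t]
    exact ⟨ENNReal.toReal_nonneg,
      by simpa using ENNReal.toReal_mono (by simp) (prob_le_one (μ := P) (s := {ω | V ω ≤ t}))⟩
  have hG01 : ∀ t, 0 ≤ G t ∧ G t ≤ 1 := by
    intro t
    rw [hG t]
    exact ⟨ENNReal.toReal_nonneg,
      by simpa using ENNReal.toReal_mono (by simp) (prob_le_one (μ := P) (s := {ω | W ω ≤ t}))⟩
  have hGneg : ∀ t ≤ (0 : ℝ), G t = 0 := by
    intro t ht
    have h1 : ν (Iic t) ≤ ν (Iic 0) := measure_mono (Iic_subset_Iic.2 ht)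
    have h2 : ν (Iic 0) = 0 := by
      have := hGIic 0
      rw [hG0] at this
      exact (ENNReal.toReal_eq_zero_iff _).1 this |>.resolve_right (measure_ne_top ν _)
    have : ν (Iic t) = 0 := le_antisymm (h2 ▸ h1) zero_le
    rw [← hGIic t, this, ENNReal.toReal_zero]
  have hν0 : ν (Iic 0) = 0 := by
    have := hGIic 0
    rw [hG0] at this
    exact (ENNReal.toReal_eq_zero_iff _).1 this |>.resolve_right (measure_ne_top ν _)
  -- ν equals the Stieltjes measure of Gs
  have hGsfun : ⇑Gs = G := funext hGs
  have hGsbot : Tendsto Gs atBot (nhds 0) := by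
    apply tendsto_const_nhds.congr'
    filter_upwards [eventually_le_atBot (0 : ℝ)] with t ht
    rw [hGs t, hGneg t ht]
  have hνGs : ν = Gs.measure := by
    refine Measure.ext_of_Iic ν Gs.measure fun a => ?_
    rw [Gs.measure_Iic hGsbot a, hGs a, sub_zero, ← hGIic a,
      ENNReal.ofReal_toReal (measure_ne_top ν _)]
  -- ν has no atoms
  have hνatom : ∀ t : ℝ, ν {t} = 0 := by
    intro t
    rw [hνGs, Gs.measure_singleton]
    have hll : Function.leftLim (⇑Gs) t = Gs t := by
      rw [hGsfun]
      exact leftLim_eq_of_tendsto (h := nhdsLT_neBot t)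
        ((hGc.tendsto t).mono_left nhdsWithin_le_nhds)
    rw [hll, sub_self, ENNReal.ofReal_zero]
  have hνIio : ∀ t : ℝ, ν (Iio t) = ν (Iic t) := by
    intro t
    refine le_antisymm (measure_mono Iio_subset_Iic_self) ?_
    calc ν (Iic t) = ν (Iio t ∪ {t}) := by rw [Iio_union_right]
      _ ≤ ν (Iio t) + ν {t} := measure_union_le _ _
      _ = ν (Iio t) := by rw [hνatom t, add_zero]
  have hGIci : ∀ t : ℝ, (ν (Ici t)).toReal = 1 - G t := by
    intro t
    have hc : Ici t = (Iio t)ᶜ := compl_Iio.symm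
    rw [hc, measure_compl measurableSet_Iio (measure_ne_top ν _), measure_univ, hνIio t,
      ENNReal.toReal_sub_of_le (prob_le_one) (by norm_num), hGIic t]
    simp
  have hFIoi : ∀ t : ℝ, (μ (Ioi t)).toReal = 1 - F t := by
    intro t
    have hc : Ioi t = (Iic t)ᶜ := compl_Iic.symm
    rw [hc, measure_compl measurableSet_Iic (measure_ne_top μ _), measure_univ,
      ENNReal.toReal_sub_of_le (prob_le_one) (by norm_num), hFIic t]
    simp
  -- the two-variable functions
  set f : ℝ × ℝ → ℝ := fun p => if min p.1 p.2 ≤ u then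
      (if p.1 ≤ p.2 then (1 : ℝ) else 0)
        + (1 - (if p.1 ≤ p.2 then (1 : ℝ) else 0))
          * ((u - min p.1 p.2) / (1 - min p.1 p.2)) else 0 with hfdef
  set f₁ : ℝ × ℝ → ℝ := fun p => if p.1 ≤ u ∧ p.1 ≤ p.2 then 1 else 0 with hf1def
  set f₂ : ℝ × ℝ → ℝ := fun p => if p.2 ≤ u ∧ p.2 < p.1 then (u - p.2) / (1 - p.2) else 0
    with hf2def
  have hratio : ∀ w : ℝ, w ≤ u → 0 ≤ (u - w) / (1 - w) ∧ (u - w) / (1 - w) ≤ 1 := by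
    intro w hw
    have h1 : (0:ℝ) < 1 - w := by linarith
    constructor
    · exact div_nonneg (by linarith) h1.le
    · rw [div_le_one h1]; linarith
  have hsplit : ∀ p, f p = f₁ p + f₂ p := by
    rintro ⟨v, w⟩
    by_cases hvw : v ≤ w
    · have hmin : min v w = v := min_eq_left hvw
      by_cases hvu : v ≤ u
      · simp only [hfdef, hf1def, hf2def, hmin]
        rw [if_pos hvu, if_pos hvw, if_pos ⟨hvu, hvw⟩,
          if_neg (fun hc => absurd hc.2 (not_lt.2 hvw))]
        ring
      · simp only [hfdef, hf1def, hf2def, hmin]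
        rw [if_neg hvu, if_neg (fun hc => hvu hc.1),
          if_neg (fun hc : w ≤ u ∧ w < v => absurd hc.2 (not_lt.2 hvw))]
        ring
    · have hwv : w < v := not_le.1 hvw
      have hmin : min v w = w := min_eq_right hwv.le
      by_cases hwu : w ≤ u
      · simp only [hfdef, hf1def, hf2def, hmin]
        rw [if_pos hwu, if_neg hvw, if_neg (fun hc : v ≤ u ∧ v ≤ w => hvw hc.2),
          if_pos ⟨hwu, hwv⟩]
        ring
      · simp only [hfdef, hf1def, hf2def, hmin]
        rw [if_neg hwu, if_neg (fun hc : v ≤ u ∧ v ≤ w => hvw hc.2),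
          if_neg (fun hc : w ≤ u ∧ w < v => hwu hc.1)]
        ring
  -- measurability
  have hmf : Measurable f := by
    apply Measurable.ite
    · exact measurableSet_le (measurable_fst.min measurable_snd) measurable_const
    · apply Measurable.add
      · exact Measurable.ite (measurableSet_le measurable_fst measurable_snd)
          measurable_const measurable_const
      · exact ((measurable_const.sub (Measurable.ite
            (measurableSet_le measurable_fst measurable_snd) measurable_const
            measurable_const))).mul
          ((measurable_const.sub (measurable_fst.min measurable_snd)).div
            (measurable_const.sub (measurable_fst.min measurable_snd)))
    · exact measurable_const
  have hmf1 : Measurable f₁ := by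
    apply Measurable.ite _ measurable_const measurable_const
    have : {p : ℝ × ℝ | p.1 ≤ u ∧ p.1 ≤ p.2}
        = {p : ℝ × ℝ | p.1 ≤ u} ∩ {p : ℝ × ℝ | p.1 ≤ p.2} := rfl
    rw [this]
    exact (measurableSet_le measurable_fst measurable_const).inter
      (measurableSet_le measurable_fst measurable_snd)
  have hmf2 : Measurable f₂ := by
    apply Measurable.ite _ (((measurable_const.sub measurable_snd)).div
      (measurable_const.sub measurable_snd)) measurable_const
    have : {p : ℝ × ℝ | p.2 ≤ u ∧ p.2 < p.1}
        = {p : ℝ × ℝ | p.2 ≤ u} ∩ {p : ℝ × ℝ | p.2 < p.1} := rfl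
    rw [this]
    exact (measurableSet_le measurable_snd measurable_const).inter
      (measurableSet_lt measurable_snd measurable_fst)
  have hif1 : Integrable f₁ (μ.prod ν) := by
    refine intBdd _ hmf1.aestronglyMeasurable 1 (ae_of_all _ fun p => ?_)
    by_cases h : p.1 ≤ u ∧ p.1 ≤ p.2 <;> simp [hf1def, h]
  have hif2 : Integrable f₂ (μ.prod ν) := by
    refine intBdd _ hmf2.aestronglyMeasurable 1 (ae_of_all _ fun p => ?_)
    by_cases h : p.2 ≤ u ∧ p.2 < p.1
    · have hr := hratio p.2 h.1
      simp only [hf2def]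
      rw [if_pos h, abs_of_nonneg hr.1]
      exact hr.2
    · simp [hf2def, h]
  -- Fubini for f₁
  have hA : ∫ p, f₁ p ∂(μ.prod ν) = F u - ∫ v in Iic u, G v ∂μ := by
    rw [integral_prod _ hif1]
    have hinner : ∀ v : ℝ, (∫ w, f₁ (v, w) ∂ν) = (Iic u).indicator (fun v => 1 - G v) v := by
      intro v
      by_cases hv : v ≤ u
      · simp only [hf1def, hv, true_and, indicator_of_mem (mem_Iic.2 hv)]
        have h1 := intIte ν (measurableSet_Ici (a := v)) (1 : ℝ)
        simp only [mem_Ici] at h1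
        rw [h1, mul_one, hGIci]
      · simp [hf1def, hv, indicator_of_notMem (show v ∉ Iic u by simpa using hv)]
    simp only [hinner]
    rw [integral_indicator measurableSet_Iic]
    have hGint : Integrable G (μ.restrict (Iic u)) := by
      refine intBdd _ (hGc.measurable.aestronglyMeasurable) 1 (ae_of_all _ fun x => ?_)
      have := hG01 x
      rw [abs_le]; constructor <;> linarith [this.1, this.2]
    rw [integral_sub (integrable_const 1) hGint, setIntegral_const, smul_eq_mul, mul_one, measureReal_def, hFIic]
  -- Fubini for f₂
  have hB : ∫ p, f₂ p ∂(μ.prod ν)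
      = ∫ w in Iic u, (1 - F w) * ((u - w) / (1 - w)) ∂ν := by
    rw [integral_prod_symm _ hif2]
    have hinner : ∀ w : ℝ, (∫ v, f₂ (v, w) ∂μ)
        = (Iic u).indicator (fun w => (1 - F w) * ((u - w) / (1 - w))) w := by
      intro w
      by_cases hw : w ≤ u
      · simp only [hf2def, hw, true_and, indicator_of_mem (mem_Iic.2 hw)]
        have h1 := intIte μ (measurableSet_Ioi (a := w)) ((u - w) / (1 - w))
        simp only [mem_Ioi] at h1
        rw [h1, hFIoi]
      · simp [hf2def, hw, indicator_of_notMem (show w ∉ Iic u by simpa using hw)]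
    simp only [hinner]
    rw [integral_indicator measurableSet_Iic]
  -- integration by parts
  set IG := ∫ v in Iic u, G v ∂μ with hIGdef
  set IF := ∫ w in Iic u, F w ∂ν with hIFdef
  have hIBP : IG + IF = F u * G u := by
    set g₁ : ℝ × ℝ → ℝ := fun p => if p.1 ≤ u ∧ p.2 ≤ p.1 then 1 else 0 with hg1def
    set g₂ : ℝ × ℝ → ℝ := fun p => if p.2 ≤ u ∧ p.1 ≤ p.2 then 1 else 0 with hg2def
    set g₃ : ℝ × ℝ → ℝ := fun p => if p.1 ≤ u ∧ p.2 ≤ u then 1 else 0 with hg3def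
    set g₄ : ℝ × ℝ → ℝ := fun p => if p.1 ≤ u ∧ p.2 = p.1 then 1 else 0 with hg4def
    have hmg1 : Measurable g₁ := by
      apply Measurable.ite _ measurable_const measurable_const
      exact (measurableSet_le measurable_fst measurable_const).inter
        (measurableSet_le measurable_snd measurable_fst)
    have hmg2 : Measurable g₂ := by
      apply Measurable.ite _ measurable_const measurable_const
      exact (measurableSet_le measurable_snd measurable_const).inter
        (measurableSet_le measurable_fst measurable_snd)
    have hmg3 : Measurable g₃ := by
      apply Measurable.ite _ measurable_const measurable_const
      exact (measurableSet_le measurable_fst measurable_const).inter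
        (measurableSet_le measurable_snd measurable_const)
    have hmg4 : Measurable g₄ := by
      apply Measurable.ite _ measurable_const measurable_const
      exact (measurableSet_le measurable_fst measurable_const).inter
        (measurableSet_eq_fun measurable_snd measurable_fst)
    have hig1 : Integrable g₁ (μ.prod ν) :=
      intBdd _ hmg1.aestronglyMeasurable 1 (ae_of_all _ fun p => by
        by_cases h : p.1 ≤ u ∧ p.2 ≤ p.1 <;> simp [hg1def, h])
    have hig2 : Integrable g₂ (μ.prod ν) :=
      intBdd _ hmg2.aestronglyMeasurable 1 (ae_of_all _ fun p => by
        by_cases h : p.2 ≤ u ∧ p.1 ≤ p.2 <;> simp [hg2def, h])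
    have hig3 : Integrable g₃ (μ.prod ν) :=
      intBdd _ hmg3.aestronglyMeasurable 1 (ae_of_all _ fun p => by
        by_cases h : p.1 ≤ u ∧ p.2 ≤ u <;> simp [hg3def, h])
    have hig4 : Integrable g₄ (μ.prod ν) :=
      intBdd _ hmg4.aestronglyMeasurable 1 (ae_of_all _ fun p => by
        by_cases h : p.1 ≤ u ∧ p.2 = p.1 <;> simp [hg4def, h])
    have e1 : ∫ p, g₁ p ∂(μ.prod ν) = IG := by
      rw [integral_prod _ hig1]
      have hinner : ∀ v : ℝ, (∫ w, g₁ (v, w) ∂ν) = (Iic u).indicator G v := by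
        intro v
        by_cases hv : v ≤ u
        · simp only [hg1def, hv, true_and, indicator_of_mem (mem_Iic.2 hv)]
          have h1 := intIte ν (measurableSet_Iic (a := v)) (1 : ℝ)
          simp only [mem_Iic] at h1
          rw [h1, mul_one, hGIic]
        · simp [hg1def, hv, indicator_of_notMem (show v ∉ Iic u by simpa using hv)]
      simp only [hinner]
      rw [integral_indicator measurableSet_Iic, hIGdef]
    have e2 : ∫ p, g₂ p ∂(μ.prod ν) = IF := by
      rw [integral_prod_symm _ hig2]
      have hinner : ∀ w : ℝ, (∫ v, g₂ (v, w) ∂μ) = (Iic u).indicator F w := by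
        intro w
        by_cases hw : w ≤ u
        · simp only [hg2def, hw, true_and, indicator_of_mem (mem_Iic.2 hw)]
          have h1 := intIte μ (measurableSet_Iic (a := w)) (1 : ℝ)
          simp only [mem_Iic] at h1
          rw [h1, mul_one, hFIic]
        · simp [hg2def, hw, indicator_of_notMem (show w ∉ Iic u by simpa using hw)]
      simp only [hinner]
      rw [integral_indicator measurableSet_Iic, hIFdef]
    have e3 : ∫ p, g₃ p ∂(μ.prod ν) = F u * G u := by
      rw [integral_prod _ hig3]
      have hinner : ∀ v : ℝ, (∫ w, g₃ (v, w) ∂ν) = (Iic u).indicator (fun _ => G u) v := by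
        intro v
        by_cases hv : v ≤ u
        · simp only [hg3def, hv, true_and, indicator_of_mem (mem_Iic.2 hv)]
          have h1 := intIte ν (measurableSet_Iic (a := u)) (1 : ℝ)
          simp only [mem_Iic] at h1
          rw [h1, mul_one, hGIic]
        · simp [hg3def, hv, indicator_of_notMem (show v ∉ Iic u by simpa using hv)]
      simp only [hinner]
      rw [integral_indicator measurableSet_Iic, setIntegral_const, smul_eq_mul, measureReal_def, hFIic]
    have e4 : ∫ p, g₄ p ∂(μ.prod ν) = 0 := by
      rw [integral_prod _ hig4]
      have hinner : ∀ v : ℝ, (∫ w, g₄ (v, w) ∂ν) = 0 := by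
        intro v
        by_cases hv : v ≤ u
        · simp only [hg4def, hv, true_and]
          have h1 := intIte ν (measurableSet_singleton v) (1 : ℝ)
          simp only [mem_singleton_iff] at h1
          rw [h1, hνatom v, ENNReal.toReal_zero, zero_mul]
        · simp [hg4def, hv]
      simp only [hinner]
      simp
    have hsum : ∀ p : ℝ × ℝ, g₁ p + g₂ p = g₃ p + g₄ p := by
      rintro ⟨v, w⟩
      simp only [hg1def, hg2def, hg3def, hg4def]
      rcases lt_trichotomy v w with hvw | hvw | hvw
      · rw [if_neg (fun hc : v ≤ u ∧ w ≤ v => absurd hc.2 (not_le.2 hvw)),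
          if_neg (fun hc : v ≤ u ∧ w = v => absurd hc.2 (ne_of_gt hvw))]
        by_cases hwu : w ≤ u
        · rw [if_pos ⟨hwu, hvw.le⟩, if_pos ⟨hvw.le.trans hwu, hwu⟩]
          norm_num
        · rw [if_neg (fun hc : w ≤ u ∧ v ≤ w => hwu hc.1),
            if_neg (fun hc : v ≤ u ∧ w ≤ u => hwu hc.2)]
      · rw [hvw]
        by_cases hwu : w ≤ u <;> simp [hwu]
      · rw [if_neg (fun hc : w ≤ u ∧ v ≤ w => absurd hc.2 (not_le.2 hvw)),
          if_neg (fun hc : v ≤ u ∧ w = v => absurd hc.2 (ne_of_lt hvw))]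
        by_cases hvu : v ≤ u
        · rw [if_pos ⟨hvu, hvw.le⟩, if_pos ⟨hvu, hvw.le.trans hvu⟩]
        · rw [if_neg (fun hc : v ≤ u ∧ w ≤ v => hvu hc.1),
            if_neg (fun hc : v ≤ u ∧ w ≤ u => hvu hc.1)]
    have hadd : (∫ p, g₁ p ∂(μ.prod ν)) + (∫ p, g₂ p ∂(μ.prod ν))
        = (∫ p, g₃ p ∂(μ.prod ν)) + (∫ p, g₄ p ∂(μ.prod ν)) := by
      rw [← integral_add hig1 hig2, ← integral_add hig3 hig4]
      exact integral_congr_ae (Filter.Eventually.of_forall hsum)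
    rw [e1, e2, e3, e4] at hadd
    linarith
  -- rewrite the main expectation via the product measure
  have hmap : P.map (fun ω => (V ω, W ω)) = μ.prod ν :=
    (indepFun_iff_map_prod_eq_prod_map_map hV.aemeasurable hW.aemeasurable).mp hVW
  have hmain : (∫ ω, (if min (V ω) (W ω) ≤ u then
          (if V ω ≤ W ω then (1 : ℝ) else 0)
            + (1 - (if V ω ≤ W ω then (1 : ℝ) else 0))
              * ((u - min (V ω) (W ω)) / (1 - min (V ω) (W ω)))
        else 0) ∂P) = ∫ p, f p ∂(μ.prod ν) := by
    have : (∫ ω, (if min (V ω) (W ω) ≤ u then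
          (if V ω ≤ W ω then (1 : ℝ) else 0)
            + (1 - (if V ω ≤ W ω then (1 : ℝ) else 0))
              * ((u - min (V ω) (W ω)) / (1 - min (V ω) (W ω)))
        else 0) ∂P) = ∫ ω, f ((fun ω => (V ω, W ω)) ω) ∂P := rfl
    rw [this, ← integral_map (hV.prodMk hW).aemeasurable]
    · rw [hmap]
    · rw [hmap]; exact hmf.aestronglyMeasurable
  -- the target integrand
  set h : ℝ → ℝ := fun s => (1 / (1 - s)) * ((1 - s) * (1 - F u) - (1 - u) * (1 - F s))
    with hhdef
  have hmh : Measurable h :=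
    ((measurable_const.div (measurable_const.sub measurable_id))).mul
      (((measurable_const.sub measurable_id).mul measurable_const).sub
        (measurable_const.mul (measurable_const.sub hFc.measurable)))
  have hhint : Integrable h (ν.restrict (Iic u)) := by
    refine intBdd _ hmh.aestronglyMeasurable 2 ?_
    filter_upwards [ae_restrict_mem (measurableSet_Iic (a := u))] with s hs
    have hs1 : (0:ℝ) < 1 - s := by simp only [mem_Iic] at hs; linarith
    have hFs := hF01 s
    have hFu := hF01 u
    have h1 : h s = (1 - F u) - (1 - u) / (1 - s) * (1 - F s) := by
      rw [hhdef]
      field_simp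
    rw [h1, abs_le]
    have hq : 0 ≤ (1 - u) / (1 - s) ∧ (1 - u) / (1 - s) ≤ 1 := by
      constructor
      · exact div_nonneg (by linarith) hs1.le
      · rw [div_le_one hs1]; simp only [mem_Iic] at hs; linarith
    have hprod : 0 ≤ (1 - u) / (1 - s) * (1 - F s) ∧ (1 - u) / (1 - s) * (1 - F s) ≤ 1 := by
      constructor
      · exact mul_nonneg hq.1 (by linarith [hFs.2])
      · calc (1 - u) / (1 - s) * (1 - F s) ≤ 1 * (1 - F s) :=
            mul_le_mul_of_nonneg_right hq.2 (by linarith [hFs.2])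
          _ ≤ 1 := by linarith [hFs.1]
    constructor <;> nlinarith [hFu.1, hFu.2, hprod.1, hprod.2]
  have hFint : Integrable F (ν.restrict (Iic u)) := by
    refine intBdd _ hFc.measurable.aestronglyMeasurable 1 (ae_of_all _ fun x => ?_)
    have := hF01 x
    rw [abs_le]; constructor <;> linarith [this.1, this.2]
  -- B decomposition
  have hBsplit : (∫ w in Iic u, (1 - F w) * ((u - w) / (1 - w)) ∂ν)
      = (∫ s in Iic u, h s ∂ν) + (F u * G u - IF) := by
    have hpt : EqOn (fun w => (1 - F w) * ((u - w) / (1 - w)))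
        (fun w => h w + (F u - F w)) (Iic u) := by
      intro s hs
      simp only [mem_Iic] at hs
      have hs1 : (1:ℝ) - s ≠ 0 := by intro hc; linarith
      simp only [hhdef]
      field_simp
      ring
    have hsubint : Integrable (fun x => F u - F x) (ν.restrict (Iic u)) :=
      (integrable_const (F u)).sub hFint
    have hconstint : Integrable (fun _ : ℝ => F u) (ν.restrict (Iic u)) :=
      integrable_const (F u)
    rw [setIntegral_congr_fun measurableSet_Iic hpt,
      integral_add hhint hsubint,
      integral_sub hconstint hFint, setIntegral_const, smul_eq_mul, measureReal_def, hGIic,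
      hIFdef]
    ring
  -- set equality a.e.
  have haeeq : (Iic u : Set ℝ) =ᵐ[ν] Ioc 0 u := by
    rw [Filter.eventuallyEq_set]
    have h0 : ∀ᵐ x ∂ν, x ∉ Iic (0:ℝ) := measure_eq_zero_iff_ae_notMem.1 hν0
    filter_upwards [h0] with x hx
    simp only [mem_Iic, not_le] at hx
    simp only [mem_Iic, mem_Ioc]
    exact ⟨fun hxu => ⟨hx, hxu⟩, fun hp => hp.2⟩
  have hIicIoc : (∫ s in Iic u, h s ∂ν) = ∫ s in Ioc (0:ℝ) u, h s ∂ν :=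
    setIntegral_congr_set haeeq
  -- main identity
  have key : (∫ ω, (if min (V ω) (W ω) ≤ u then
          (if V ω ≤ W ω then (1 : ℝ) else 0)
            + (1 - (if V ω ≤ W ω then (1 : ℝ) else 0))
              * ((u - min (V ω) (W ω)) / (1 - min (V ω) (W ω)))
        else 0) ∂P)
      = F u + ∫ s in Set.Ioc (0 : ℝ) u, h s ∂Gs.measure := by
    rw [hmain]
    have : (∫ p, f p ∂(μ.prod ν)) = (∫ p, f₁ p ∂(μ.prod ν)) + ∫ p, f₂ p ∂(μ.prod ν) := by
      rw [← integral_add hif1 hif2]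
      exact integral_congr_ae (Filter.Eventually.of_forall hsplit)
    rw [this, hA, hB, hBsplit, ← hνGs, ← hIicIoc]
    linarith
  refine ⟨key, fun hunif => ?_⟩
  rw [key]
  have hFu : F u = u := hunif u ⟨hu0, hu1.le⟩
  have hzero : (∫ s in Set.Ioc (0:ℝ) u, h s ∂Gs.measure) = 0 := by
    have hEq : EqOn h (fun _ => (0:ℝ)) (Ioc 0 u) := by
      intro s hs
      obtain ⟨hs0, hsu⟩ := hs
      have hFs : F s = s := hunif s ⟨hs0.le, by linarith⟩
      simp only [hhdef]
      rw [hFs, hFu]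
      ring
    rw [setIntegral_congr_fun measurableSet_Ioc hEq]
    simp
  rw [hzero, hFu, add_zero]
end

section
/- The U-statistic kernel J is degenerate under the null hypothesis: for every u ∈ [0,1) and δ ∈ {0,1}, E[J((u,δ),(U,Δ))] = 0. -/
open MeasureTheory ProbabilityTheory

/-- `∫∫ K(x,y) d(μ−ν)(x) d(μ'−ν')(y)`, expanded by bilinearity. -/
noncomputable def pairIntDiff (K : ℝ → ℝ → ℝ) (μ ν μ' ν' : Measure ℝ) : ℝ :=
  (∫ x, ∫ y, K x y ∂μ' ∂μ) - (∫ x, ∫ y, K x y ∂ν' ∂μ)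
    - (∫ x, ∫ y, K x y ∂μ' ∂ν) + (∫ x, ∫ y, K x y ∂ν' ∂ν)

/-- The U-statistic kernel
`J((u,δ),(u',δ')) = ∫∫ K(x,y) d(λ − α_{u,δ})(x) d(λ − α_{u',δ'})(y)`,
where `λ` is Lebesgue measure on `[0,1]`. -/
noncomputable def Jker (K : ℝ → ℝ → ℝ) (p q : ℝ × Bool) : ℝ :=
  pairIntDiff K (volume.restrict (Set.Icc (0:ℝ) 1)) (alphaMeas p.1 p.2)
    (volume.restrict (Set.Icc (0:ℝ) 1)) (alphaMeas q.1 q.2)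

open Set

instance alphaMeas_finite (u : ℝ) (δ : Bool) : IsFiniteMeasure (alphaMeas u δ) := by
  rw [alphaMeas]
  cases δ
  · simp only [Bool.false_eq_true, if_false]
    constructor
    rw [Measure.smul_apply, Measure.restrict_apply_univ, Real.volume_Ioo, smul_eq_mul]
    exact ENNReal.mul_lt_top ENNReal.ofReal_lt_top ENNReal.ofReal_lt_top
  · simp only [if_true]
    infer_instance

lemma integrable_of_abs_le {α : Type*} [MeasurableSpace α] {μ : Measure α} [IsFiniteMeasure μ]
    {f : α → ℝ} (hm : AEStronglyMeasurable f μ) {M : ℝ} (h : ∀ x, |f x| ≤ M) :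
    Integrable f μ :=
  Integrable.mono' (integrable_const M) hm (Filter.Eventually.of_forall fun x => by
    simpa [Real.norm_eq_abs] using h x)

lemma integral_alpha_eq (g : ℝ → ℝ) (v : ℝ) (hv : v ≤ 1) (d : Bool) :
    ∫ y, g y ∂(alphaMeas v d)
      = if d then g v else (1 / (1 - v)) * ∫ y in Set.Ioo v 1, g y := by
  cases d
  · simp only [alphaMeas, Bool.false_eq_true, if_false]
    rw [integral_smul_measure, ENNReal.toReal_ofReal (one_div_nonneg.mpr (by linarith)), smul_eq_mul]
  · simp only [alphaMeas, if_true]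
    exact integral_dirac g v

lemma abs_integral_alpha_le (g : ℝ → ℝ) (hg : Measurable g) (M : ℝ) (hM : ∀ y, |g y| ≤ M) (v : ℝ)
    (hv : v ∈ Set.Icc (0:ℝ) 1) (d : Bool) :
    |∫ y, g y ∂(alphaMeas v d)| ≤ M := by
  have hM0 : 0 ≤ M := le_trans (abs_nonneg _) (hM 0)
  rw [integral_alpha_eq g v hv.2 d]
  cases d
  · simp only [Bool.false_eq_true, if_false]
    rcases lt_or_eq_of_le hv.2 with h1 | h1
    · have hI : |∫ y in Set.Ioo v 1, g y| ≤ M * (1 - v) := by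
        have := norm_setIntegral_le_of_norm_le_const (s := Set.Ioo v 1) (μ := volume)
          (C := M) (f := g) (by rw [Real.volume_Ioo]; exact ENNReal.ofReal_lt_top)
          (fun y _ => by simpa [Real.norm_eq_abs] using hM y)
        rwa [Real.norm_eq_abs, measureReal_def, Real.volume_Ioo, ENNReal.toReal_ofReal (by linarith)] at this
      have h1v : (0:ℝ) < 1 - v := by linarith
      rw [abs_mul, abs_of_nonneg (by positivity : (0:ℝ) ≤ 1/(1-v))]
      calc 1/(1-v) * |∫ y in Set.Ioo v 1, g y| ≤ 1/(1-v) * (M * (1-v)) := by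
            exact mul_le_mul_of_nonneg_left hI (by positivity)
        _ = M := by field_simp
    · rw [← h1]
      simp [hM0]
  · simpa using hM v

lemma alphaMeas_compl_zero (v : ℝ) (hv : v ∈ Set.Icc (0:ℝ) 1) (d : Bool) :
    alphaMeas v d (Set.Icc (0:ℝ) 1)ᶜ = 0 := by
  cases d
  · simp only [alphaMeas, Bool.false_eq_true, if_false, Measure.smul_apply,
      Measure.restrict_apply (measurableSet_Icc.compl), smul_eq_mul]
    have : (Set.Icc (0:ℝ) 1)ᶜ ∩ Set.Ioo v 1 = ∅ := by
      apply Set.eq_empty_iff_forall_notMem.mpr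
      rintro x ⟨hx1, hx2⟩
      exact hx1 ⟨le_trans hv.1 hx2.1.le, hx2.2.le⟩
    rw [this]
    simp
  · simp only [alphaMeas, if_true]
    rw [Measure.dirac_apply' _ (measurableSet_Icc.compl)]
    simp [Set.indicator, hv.1, hv.2]


lemma exists_cdf_le (μ : Measure ℝ) [IsProbabilityMeasure μ] (F : ℝ → ℝ)
    (hμ : ∀ t, μ (Set.Iic t) = ENNReal.ofReal (F t)) {a : ℝ} (ha : 0 < a) :
    ∃ t, F t ≤ a := by
  by_contra h
  push_neg at h
  have hb : ∀ y : ℝ, μ (Set.Ici y) ≤ 1 - ENNReal.ofReal a := by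
    intro y
    have hdisj : Disjoint (Set.Iic (y - 1)) (Set.Ici y) := by
      apply Set.disjoint_left.mpr
      intro x hx hx2
      simp only [Set.mem_Iic] at hx
      simp only [Set.mem_Ici] at hx2
      linarith
    have hsum : μ (Set.Iic (y - 1)) + μ (Set.Ici y) ≤ 1 := by
      calc μ (Set.Iic (y - 1)) + μ (Set.Ici y)
          = μ (Set.Iic (y - 1) ∪ Set.Ici y) := (measure_union hdisj measurableSet_Ici).symm
        _ ≤ μ Set.univ := measure_mono (Set.subset_univ _)
        _ = 1 := measure_univ
    have h1 : ENNReal.ofReal a ≤ μ (Set.Iic (y - 1)) := by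
      rw [hμ]
      exact ENNReal.ofReal_le_ofReal (h _).le
    calc μ (Set.Ici y) ≤ 1 - μ (Set.Iic (y-1)) := by
          exact ENNReal.le_sub_of_add_le_left (measure_ne_top _ _) hsum
      _ ≤ 1 - ENNReal.ofReal a := tsub_le_tsub_left h1 1
  have hlim := tendsto_measure_Ici_atBot μ
  rw [measure_univ] at hlim
  have : (1:ENNReal) ≤ 1 - ENNReal.ofReal a :=
    le_of_tendsto hlim (Filter.Eventually.of_forall hb)
  have h2 : (1:ENNReal) - ENNReal.ofReal a < 1 :=
    ENNReal.sub_lt_self ENNReal.one_ne_top one_ne_zero (by simpa using ha)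
  exact absurd this (not_le.mpr h2)

lemma map_cdf_restrict (μ : Measure ℝ) [IsProbabilityMeasure μ] (F : ℝ → ℝ)
    (hc : Continuous F) (hmono : Monotone F) (h0 : ∀ t, 0 ≤ F t) (h1 : ∀ t, F t ≤ 1)
    (hμ : ∀ t, μ (Set.Iic t) = ENNReal.ofReal (F t)) (c : ℝ) :
    Measure.map F (μ.restrict (Set.Iic c)) = volume.restrict (Set.Icc 0 (F c)) := by
  haveI hFin : IsFiniteMeasure (Measure.map F (μ.restrict (Set.Iic c))) := by
    constructor
    rw [Measure.map_apply hc.measurable MeasurableSet.univ]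
    exact measure_lt_top _ _
  refine Measure.ext_of_Iic _ _ (fun a => ?_)
  rw [Measure.map_apply hc.measurable measurableSet_Iic,
    Measure.restrict_apply (hc.measurable measurableSet_Iic),
    Measure.restrict_apply measurableSet_Iic]
  rcases lt_or_ge a 0 with ha | ha
  · have e1 : F ⁻¹' Set.Iic a ∩ Set.Iic c = ∅ := by
      apply Set.eq_empty_iff_forall_notMem.mpr
      rintro x ⟨hx1, _⟩
      simp only [Set.mem_preimage, Set.mem_Iic] at hx1
      linarith [h0 x]
    have e2 : Set.Iic a ∩ Set.Icc 0 (F c) = ∅ := by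
      apply Set.eq_empty_iff_forall_notMem.mpr
      rintro x ⟨hx1, hx2⟩
      simp only [Set.mem_Iic] at hx1
      linarith [hx2.1]
    rw [e1, e2]
    simp
  · have eRHS : Set.Iic a ∩ Set.Icc 0 (F c) = Set.Icc 0 (min a (F c)) := by
      ext x
      simp only [Set.mem_inter_iff, Set.mem_Iic, Set.mem_Icc, le_min_iff]
      tauto
    rw [eRHS, Real.volume_Icc]
    rcases le_or_gt (F c) a with hca | hca
    · have e1 : F ⁻¹' Set.Iic a ∩ Set.Iic c = Set.Iic c := by
        apply Set.inter_eq_self_of_subset_right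
        intro x hx
        simp only [Set.mem_Iic] at hx
        simp only [Set.mem_preimage, Set.mem_Iic]
        exact le_trans (hmono hx) hca
      rw [e1, hμ, min_eq_right hca, sub_zero]
    · -- a < F c
      have e1 : F ⁻¹' Set.Iic a ∩ Set.Iic c = F ⁻¹' Set.Iic a := by
        apply Set.inter_eq_self_of_subset_left
        intro x hx
        simp only [Set.mem_preimage, Set.mem_Iic] at hx ⊢
        by_contra hxc
        push_neg at hxc
        exact absurd (le_trans (hmono hxc.le) hx) (not_le.mpr hca)
      rw [e1, min_eq_left hca.le, sub_zero]
      have hsub : ∀ x ∈ F ⁻¹' Set.Iic a, x ≤ c := by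
        intro x hx
        simp only [Set.mem_preimage, Set.mem_Iic] at hx
        by_contra hxc
        push_neg at hxc
        exact absurd (le_trans (hmono hxc.le) hx) (not_le.mpr hca)
      by_cases hS : (F ⁻¹' Set.Iic a).Nonempty
      · have hclosed : IsClosed (F ⁻¹' Set.Iic a) := isClosed_Iic.preimage hc
        have hbdd : BddAbove (F ⁻¹' Set.Iic a) := ⟨c, hsub⟩
        set s := sSup (F ⁻¹' Set.Iic a) with hs
        have hsmem : s ∈ F ⁻¹' Set.Iic a := hclosed.csSup_mem hS hbdd
        have hsa : F s ≤ a := hsmem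
        have hsc : s ≤ c := hsub s hsmem
        have hSiic : F ⁻¹' Set.Iic a = Set.Iic s := by
          ext x
          simp only [Set.mem_preimage, Set.mem_Iic]
          exact ⟨fun hx => le_csSup hbdd hx, fun hx => le_trans (hmono hx) hsa⟩
        have hFsa : F s = a := by
          obtain ⟨t, htmem, hFt⟩ := intermediate_value_Icc hsc hc.continuousOn
            (⟨hsa, hca.le⟩ : a ∈ Set.Icc (F s) (F c))
          have hts : t ≤ s := le_csSup hbdd (by simp [hFt.le])
          have : s = t := le_antisymm htmem.1 hts
          rw [this, hFt]
        rw [hSiic, hμ, hFsa]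
      · rw [Set.not_nonempty_iff_eq_empty.mp hS]
        have ha0 : a = 0 := by
          by_contra hne
          have ha' : 0 < a := lt_of_le_of_ne ha (Ne.symm hne)
          obtain ⟨t, ht⟩ := exists_cdf_le μ F hμ ha'
          exact hS ⟨t, by simpa using ht⟩
        simp [ha0]


lemma volIcc_finite (a b : ℝ) : IsFiniteMeasure (volume.restrict (Set.Icc a b)) := by
  constructor
  rw [Measure.restrict_apply_univ, Real.volume_Icc]
  exact ENNReal.ofReal_lt_top

lemma integral_H (μ : Measure ℝ) [IsProbabilityMeasure μ] (F : ℝ → ℝ)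
    (hc : Continuous F) (hmono : Monotone F) (h0 : ∀ t, 0 ≤ F t) (h1 : ∀ t, F t ≤ 1)
    (hμ : ∀ t, μ (Set.Iic t) = ENNReal.ofReal (F t))
    (g : ℝ → ℝ) (hg : Measurable g) (M : ℝ) (hM : ∀ y, |g y| ≤ M) (c : ℝ)
    (hmap : Measure.map F (μ.restrict (Set.Iic c)) = volume.restrict (Set.Icc 0 (F c))) :
    ∫ x, (if x ≤ c then g (F x) else (1/(1 - F c)) * ∫ y in Set.Ioo (F c) 1, g y) ∂μ
      = ∫ y in Set.Icc (0:ℝ) 1, g y := by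
  haveI := volIcc_finite (0:ℝ) 1
  set I : ℝ := (1/(1 - F c)) * ∫ y in Set.Ioo (F c) 1, g y with hI
  set f : ℝ → ℝ := fun x => if x ≤ c then g (F x) else I with hf
  have hfm : Measurable f :=
    Measurable.ite measurableSet_Iic (hg.comp hc.measurable) measurable_const
  have hfb : ∀ x, |f x| ≤ max M |I| := by
    intro x
    by_cases hx : x ≤ c
    · simp only [hf, if_pos hx]
      exact le_max_of_le_left (hM _)
    · simp only [hf, if_neg hx]
      exact le_max_right _ _
  have hint : Integrable f μ := integrable_of_abs_le hfm.aestronglyMeasurable hfb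
  have hsplit := integral_add_compl (s := Set.Iic c) measurableSet_Iic hint
  rw [← hsplit, Set.compl_Iic]
  have T1 : ∫ x in Set.Iic c, f x ∂μ = ∫ y in Set.Icc 0 (F c), g y := by
    rw [setIntegral_congr_fun measurableSet_Iic (fun x hx => by
      simp only [hf]; exact if_pos hx)]
    rw [← hmap, integral_map hc.measurable.aemeasurable hg.aestronglyMeasurable]
  have T2 : ∫ x in Set.Ioi c, f x ∂μ = (1 - F c) * I := by
    rw [setIntegral_congr_fun measurableSet_Ioi (fun x hx => by
      simp only [hf]; exact if_neg (not_le.mpr hx)), setIntegral_const]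
    have hIoi : μ (Set.Ioi c) = 1 - ENNReal.ofReal (F c) := by
      rw [← Set.compl_Iic, measure_compl measurableSet_Iic (measure_ne_top μ _), measure_univ, hμ]
    rw [measureReal_def, hIoi, ENNReal.toReal_sub_of_le (ENNReal.ofReal_le_one.mpr (h1 c)) ENNReal.one_ne_top,
      ENNReal.toReal_one, ENNReal.toReal_ofReal (h0 c), smul_eq_mul]
  rw [T1, T2]
  have hIcc : IntegrableOn g (Set.Icc (0:ℝ) 1) volume :=
    integrable_of_abs_le hg.aestronglyMeasurable.restrict hM
  rcases lt_or_eq_of_le (h1 c) with hfc | hfc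
  · -- F c < 1
    have hI2 : (1 - F c) * I = ∫ y in Set.Ioo (F c) 1, g y := by
      rw [hI]
      have : (1 : ℝ) - F c ≠ 0 := by linarith
      field_simp
    rw [hI2]
    have hdisj : Disjoint (Set.Icc (0:ℝ) (F c)) (Set.Ioo (F c) 1) := by
      apply Set.disjoint_left.mpr
      intro x hx hx2
      exact absurd hx.2 (not_le.mpr hx2.1)
    have hunion : Set.Icc (0:ℝ) (F c) ∪ Set.Ioo (F c) 1 = Set.Ico (0:ℝ) 1 := by
      ext x
      simp only [Set.mem_union, Set.mem_Icc, Set.mem_Ioo, Set.mem_Ico]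
      constructor
      · rintro (⟨hx1, hx2⟩ | ⟨hx1, hx2⟩)
        · exact ⟨hx1, lt_of_le_of_lt hx2 hfc⟩
        · exact ⟨le_trans (h0 c) hx1.le, hx2⟩
      · rintro ⟨hx1, hx2⟩
        by_cases hxv : x ≤ F c
        · exact Or.inl ⟨hx1, hxv⟩
        · exact Or.inr ⟨not_le.mp hxv, hx2⟩
    rw [← setIntegral_union hdisj measurableSet_Ioo
      (hIcc.mono_set (Set.Icc_subset_Icc_right (h1 c)))
      (hIcc.mono_set (fun x hx => ⟨le_trans (h0 c) hx.1.le, hx.2.le⟩)),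
      hunion, ← integral_Icc_eq_integral_Ico]
  · -- F c = 1
    rw [← hfc]
    simp
lemma keyA {Ω : Type*} [MeasurableSpace Ω] (P : Measure Ω) [IsProbabilityMeasure P]
    (X C : Ω → ℝ) (hX : Measurable X) (hC : Measurable C)
    (hXC : IndepFun X C P)
    (F₀ : ℝ → ℝ) (hF₀c : Continuous F₀)
    (hF₀ : ∀ t : ℝ, F₀ t = (P {ω | X ω ≤ t}).toReal)
    (g : ℝ → ℝ) (hg : Measurable g) (M : ℝ) (hM : ∀ y, |g y| ≤ M) :
    ∫ ω, (∫ y, g y ∂(alphaMeas (F₀ (min (X ω) (C ω))) (decide (X ω ≤ C ω)))) ∂P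
      = ∫ y in Set.Icc (0:ℝ) 1, g y := by
  set μX := Measure.map X P with hmX
  set μC := Measure.map C P with hmC
  haveI : IsProbabilityMeasure μX := Measure.isProbabilityMeasure_map hX.aemeasurable
  haveI : IsProbabilityMeasure μC := Measure.isProbabilityMeasure_map hC.aemeasurable
  have hμX : ∀ t, μX (Set.Iic t) = ENNReal.ofReal (F₀ t) := by
    intro t
    rw [hmX, Measure.map_apply hX measurableSet_Iic, hF₀ t,
      ENNReal.ofReal_toReal (measure_ne_top _ _)]
    rfl
  have hmono : Monotone F₀ := by
    intro s t hst
    rw [hF₀, hF₀]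
    exact ENNReal.toReal_mono (measure_ne_top _ _)
      (measure_mono fun ω hω => le_trans hω hst)
  have h0 : ∀ t, 0 ≤ F₀ t := fun t => by rw [hF₀]; exact ENNReal.toReal_nonneg
  have h1 : ∀ t, F₀ t ≤ 1 := by
    intro t
    rw [hF₀]
    calc (P {ω | X ω ≤ t}).toReal ≤ (1 : ENNReal).toReal :=
          ENNReal.toReal_mono ENNReal.one_ne_top prob_le_one
      _ = 1 := ENNReal.toReal_one
  set H : ℝ × ℝ → ℝ := fun p =>
    if p.1 ≤ p.2 then g (F₀ p.1) else (1/(1 - F₀ p.2)) * ∫ y in Set.Ioo (F₀ p.2) 1, g y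
    with hH
  have h_eq : ∀ ω, (∫ y, g y ∂(alphaMeas (F₀ (min (X ω) (C ω))) (decide (X ω ≤ C ω))))
      = H (X ω, C ω) := by
    intro ω
    by_cases h : X ω ≤ C ω
    · rw [min_eq_left h, integral_alpha_eq g _ (h1 _)]
      simp [hH, h]
    · rw [min_eq_right (le_of_not_ge h), integral_alpha_eq g _ (h1 _)]
      simp [hH, h]
  have hIg : Measurable (fun v : ℝ => ∫ y in Set.Ioo v 1, g y) := by
    have hjm : Measurable (fun q : ℝ × ℝ => if q.1 < q.2 ∧ q.2 < 1 then g q.2 else 0) := by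
      refine Measurable.ite ?_ (hg.comp measurable_snd) measurable_const
      exact (measurableSet_lt measurable_fst measurable_snd).inter
        (measurableSet_lt measurable_snd measurable_const)
    have h2 := hjm.stronglyMeasurable.integral_prod_right' (ν := volume)
    have h3 : (fun v : ℝ => ∫ y in Set.Ioo v 1, g y)
        = fun v : ℝ => ∫ y, (if v < y ∧ y < 1 then g y else 0) ∂volume := by
      funext v
      rw [← integral_indicator measurableSet_Ioo]
      congr 1
      funext y
      simp [Set.indicator_apply, Set.mem_Ioo]
    rw [h3]
    exact h2.measurable
  have hHm : Measurable H := by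
    refine Measurable.ite (measurableSet_le measurable_fst measurable_snd)
      (hg.comp (hF₀c.measurable.comp measurable_fst)) ?_
    exact (measurable_const.div
      (measurable_const.sub (hF₀c.measurable.comp measurable_snd))).mul
      (hIg.comp (hF₀c.measurable.comp measurable_snd))
  have hHb : ∀ p, |H p| ≤ M := by
    intro p
    by_cases h : p.1 ≤ p.2
    · simp only [hH, if_pos h]
      exact hM _
    · simp only [hH, if_neg h]
      have := abs_integral_alpha_le g hg M hM (F₀ p.2) ⟨h0 _, h1 _⟩ false
      rwa [integral_alpha_eq g _ (h1 _) false, if_neg (by simp)] at this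
  have hHint : Integrable H (μX.prod μC) :=
    integrable_of_abs_le hHm.aestronglyMeasurable hHb
  calc ∫ ω, (∫ y, g y ∂(alphaMeas (F₀ (min (X ω) (C ω))) (decide (X ω ≤ C ω)))) ∂P
      = ∫ ω, H (X ω, C ω) ∂P := integral_congr_ae (Filter.Eventually.of_forall h_eq)
    _ = ∫ p, H p ∂(Measure.map (fun ω => (X ω, C ω)) P) :=
        (integral_map (hX.prodMk hC).aemeasurable hHm.aestronglyMeasurable).symm
    _ = ∫ p, H p ∂(μX.prod μC) := by
        rw [(indepFun_iff_map_prod_eq_prod_map_map hX.aemeasurable hC.aemeasurable).mp hXC]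
    _ = ∫ c', ∫ x, H (x, c') ∂μX ∂μC := integral_prod_symm H hHint
    _ = ∫ _ : ℝ, (∫ y in Set.Icc (0:ℝ) 1, g y) ∂μC := by
        refine integral_congr_ae (Filter.Eventually.of_forall fun c' => ?_)
        exact integral_H μX F₀ hF₀c hmono h0 h1 hμX g hg M hM c'
          (map_cdf_restrict μX F₀ hF₀c hmono h0 h1 hμX c')
    _ = ∫ y in Set.Icc (0:ℝ) 1, g y := by
        rw [integral_const, probReal_univ, one_smul]
lemma integral_congr_on_Icc {μ : Measure ℝ} (hcar : μ (Set.Icc (0:ℝ) 1)ᶜ = 0)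
    {f g : ℝ → ℝ} (h : ∀ x ∈ Set.Icc (0:ℝ) 1, f x = g x) :
    ∫ x, f x ∂μ = ∫ x, g x ∂μ := by
  refine integral_congr_ae ?_
  have hmem : ∀ᵐ x ∂μ, x ∈ Set.Icc (0:ℝ) 1 := by
    rw [ae_iff]
    exact hcar
  filter_upwards [hmem] with x hx using h x hx

lemma restrict_Icc_compl_zero :
    (volume.restrict (Set.Icc (0:ℝ) 1)) (Set.Icc (0:ℝ) 1)ᶜ = 0 := by
  rw [Measure.restrict_apply measurableSet_Icc.compl]
  simp

lemma Jker_congr (K K' : ℝ → ℝ → ℝ)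
    (h : ∀ x ∈ Set.Icc (0:ℝ) 1, ∀ y ∈ Set.Icc (0:ℝ) 1, K x y = K' x y)
    (p q : ℝ × Bool) (hp : p.1 ∈ Set.Icc (0:ℝ) 1) (hq : q.1 ∈ Set.Icc (0:ℝ) 1) :
    Jker K p q = Jker K' p q := by
  have hlam := restrict_Icc_compl_zero
  have hp' := alphaMeas_compl_zero p.1 hp p.2
  have hq' := alphaMeas_compl_zero q.1 hq q.2
  have inner : ∀ (ν : Measure ℝ), ν (Set.Icc (0:ℝ) 1)ᶜ = 0 → ∀ x, x ∈ Set.Icc (0:ℝ) 1 →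
      ∫ y, K x y ∂ν = ∫ y, K' x y ∂ν := fun ν hν x hx =>
    integral_congr_on_Icc hν (fun y hy => h x hx y hy)
  unfold Jker pairIntDiff
  rw [integral_congr_on_Icc hlam (fun x hx => inner _ hlam x hx),
    integral_congr_on_Icc hlam (fun x hx => inner _ hq' x hx),
    integral_congr_on_Icc hp' (fun x hx => inner _ hlam x hx),
    integral_congr_on_Icc hp' (fun x hx => inner _ hq' x hx)]

/-- Under the null hypothesis of independent right censoring, the
U-statistic kernel `J` is degenerate: for every `u ∈ [0,1)` and `δ ∈ {0,1}`,
`E[J((u,δ),(U,Δ))] = 0`. -/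
theorem ustat_kernel_degenerate
    {Ω : Type*} [MeasurableSpace Ω] (P : Measure Ω) [IsProbabilityMeasure P]
    (X C : Ω → ℝ) (hX : Measurable X) (hC : Measurable C)
    (hXC : IndepFun X C P)
    (F₀ : ℝ → ℝ) (hF₀c : Continuous F₀)
    (hF₀ : ∀ t : ℝ, F₀ t = (P {ω | X ω ≤ t}).toReal)
    (K : ℝ → ℝ → ℝ) (hK : Measurable (Function.uncurry K))
    (hKb : ∃ M : ℝ, ∀ x ∈ Set.Icc (0:ℝ) 1, ∀ y ∈ Set.Icc (0:ℝ) 1, |K x y| ≤ M)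
    (u : ℝ) (hu : u ∈ Set.Ico (0 : ℝ) 1) (δ : Bool) :
    ∫ ω, Jker K (u, δ) (F₀ (min (X ω) (C ω)), decide (X ω ≤ C ω)) ∂P = 0 := by
  obtain ⟨M, hKM⟩ := hKb
  have h0 : ∀ t, 0 ≤ F₀ t := fun t => by rw [hF₀]; exact ENNReal.toReal_nonneg
  have h1 : ∀ t, F₀ t ≤ 1 := by
    intro t
    rw [hF₀]
    calc (P {ω | X ω ≤ t}).toReal ≤ (1 : ENNReal).toReal :=
          ENNReal.toReal_mono ENNReal.one_ne_top prob_le_one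
      _ = 1 := ENNReal.toReal_one
  have hV : ∀ ω, F₀ (min (X ω) (C ω)) ∈ Set.Icc (0:ℝ) 1 := fun ω => ⟨h0 _, h1 _⟩
  have hVm : Measurable (fun ω => F₀ (min (X ω) (C ω))) :=
    hF₀c.measurable.comp (hX.min hC)
  have hu' : u ∈ Set.Icc (0:ℝ) 1 := ⟨hu.1, hu.2.le⟩
  set M' : ℝ := max M 0 with hM'
  set Kb : ℝ → ℝ → ℝ := fun x y =>
    if x ∈ Set.Icc (0:ℝ) 1 ∧ y ∈ Set.Icc (0:ℝ) 1 then K x y else 0 with hKbdef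
  have hKbeq : ∀ x ∈ Set.Icc (0:ℝ) 1, ∀ y ∈ Set.Icc (0:ℝ) 1, K x y = Kb x y := by
    intro x hx y hy
    have : Kb x y = if x ∈ Set.Icc (0:ℝ) 1 ∧ y ∈ Set.Icc (0:ℝ) 1 then K x y else 0 := rfl
    rw [this, if_pos (show x ∈ Set.Icc (0:ℝ) 1 ∧ y ∈ Set.Icc (0:ℝ) 1 from ⟨hx, hy⟩)]
  have hKbm : Measurable (Function.uncurry Kb) := by
    have e : Function.uncurry Kb = fun p : ℝ × ℝ =>
        if p ∈ (Set.Icc (0:ℝ) 1) ×ˢ (Set.Icc (0:ℝ) 1) then Function.uncurry K p else 0 := by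
      funext p
      simp only [Function.uncurry, hKbdef, Set.mem_prod]
    rw [e]
    exact Measurable.ite (measurableSet_Icc.prod measurableSet_Icc) hK measurable_const
  have hKbx : ∀ x, Measurable (Kb x) := fun x => hKbm.comp measurable_prodMk_left
  have hKbb : ∀ x y, |Kb x y| ≤ M' := by
    intro x y
    by_cases h : x ∈ Set.Icc (0:ℝ) 1 ∧ y ∈ Set.Icc (0:ℝ) 1
    · simp only [hKbdef, if_pos h]
      exact le_trans (hKM x h.1 y h.2) (le_max_left _ _)
    · simp only [hKbdef, if_neg h, abs_zero]
      exact le_max_right _ _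
  -- replace K by Kb in the goal
  have hrepl : ∀ ω, Jker K (u, δ) (F₀ (min (X ω) (C ω)), decide (X ω ≤ C ω))
      = Jker Kb (u, δ) (F₀ (min (X ω) (C ω)), decide (X ω ≤ C ω)) :=
    fun ω => Jker_congr K Kb hKbeq _ _ hu' (hV ω)
  rw [integral_congr_ae (Filter.Eventually.of_forall hrepl)]
  -- notation
  haveI := volIcc_finite (0:ℝ) 1
  set lam : Measure ℝ := volume.restrict (Set.Icc (0:ℝ) 1) with hlamdef
  set f : Ω → ℝ → ℝ := fun ω x =>
    ∫ y, Kb x y ∂(alphaMeas (F₀ (min (X ω) (C ω))) (decide (X ω ≤ C ω))) with hfdef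
  -- joint measurability of f
  have hfm : Measurable (Function.uncurry f) := by
    have hIg2 : Measurable (fun q : ℝ × ℝ => ∫ y in Set.Ioo q.2 1, Kb q.1 y) := by
      have hjm : Measurable (fun r : (ℝ × ℝ) × ℝ =>
          if r.1.2 < r.2 ∧ r.2 < 1 then Kb r.1.1 r.2 else 0) := by
        refine Measurable.ite ?_ ?_ measurable_const
        · have e2 : {r : (ℝ × ℝ) × ℝ | r.1.2 < r.2 ∧ r.2 < 1}
              = {r : (ℝ × ℝ) × ℝ | r.1.2 < r.2} ∩ {r : (ℝ × ℝ) × ℝ | r.2 < 1} := rfl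
          show MeasurableSet {r : (ℝ × ℝ) × ℝ | r.1.2 < r.2 ∧ r.2 < 1}
          rw [e2]
          exact (measurableSet_lt (measurable_snd.comp measurable_fst) measurable_snd).inter
            (measurableSet_lt measurable_snd measurable_const)
        · exact hKbm.comp ((measurable_fst.comp measurable_fst).prodMk measurable_snd)
      have h2 := hjm.stronglyMeasurable.integral_prod_right' (ν := volume)
      have h3 : (fun q : ℝ × ℝ => ∫ y in Set.Ioo q.2 1, Kb q.1 y)
          = fun q : ℝ × ℝ => ∫ y, (if q.2 < y ∧ y < 1 then Kb q.1 y else 0) ∂volume := by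
        funext q
        rw [← integral_indicator measurableSet_Ioo]
        congr 1
        funext y
        simp [Set.indicator_apply, Set.mem_Ioo]
      rw [h3]
      exact h2.measurable
    have hDlm : Measurable (fun ω : Ω => decide (X ω ≤ C ω)) := by
      apply measurable_to_bool
      have e0 : (fun ω : Ω => decide (X ω ≤ C ω)) ⁻¹' {true} = {ω | X ω ≤ C ω} := by
        ext ω
        simp
      rw [e0]
      exact measurableSet_le hX hC
    have hg0 : Measurable (fun w : (ℝ × ℝ) × Bool => if w.2 then Kb w.1.1 w.1.2
        else (1/(1 - w.1.2)) * ∫ y in Set.Ioo w.1.2 1, Kb w.1.1 y) := by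
      refine Measurable.ite ?_ ?_ ?_
      · exact measurable_snd (measurableSet_singleton true)
      · exact hKbm.comp measurable_fst
      · exact (measurable_const.div
          (measurable_const.sub (measurable_snd.comp measurable_fst))).mul
          (hIg2.comp measurable_fst)
    have e : Function.uncurry f = (fun w : (ℝ × ℝ) × Bool => if w.2 then Kb w.1.1 w.1.2
        else (1/(1 - w.1.2)) * ∫ y in Set.Ioo w.1.2 1, Kb w.1.1 y) ∘
        (fun z : Ω × ℝ => ((z.2, F₀ (min (X z.1) (C z.1))), decide (X z.1 ≤ C z.1))) := by
      funext z
      show f z.1 z.2 = _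
      rw [hfdef]
      exact integral_alpha_eq (Kb z.2) _ (h1 _) _
    rw [e]
    exact hg0.comp (((measurable_snd.prodMk (hVm.comp measurable_fst))).prodMk
      (hDlm.comp measurable_fst))
  have hfb : ∀ z : Ω × ℝ, |Function.uncurry f z| ≤ M' := by
    rintro ⟨ω, x⟩
    have e : Function.uncurry f (ω, x)
        = ∫ y, Kb x y ∂(alphaMeas (F₀ (min (X ω) (C ω))) (decide (X ω ≤ C ω))) := rfl
    rw [e]
    exact abs_integral_alpha_le (Kb x) (hKbx x) M' (hKbb x)
      (F₀ (min (X ω) (C ω))) (hV ω) (decide (X ω ≤ C ω))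
  -- generic swap + keyA
  have main : ∀ (ξ : Measure ℝ), IsFiniteMeasure ξ →
      Integrable (fun ω => ∫ x, f ω x ∂ξ) P ∧
      (∫ ω, ∫ x, f ω x ∂ξ ∂P = ∫ x, ∫ y, Kb x y ∂lam ∂ξ) := by
    intro ξ hξ
    haveI := hξ
    have hint : Integrable (Function.uncurry f) (P.prod ξ) :=
      integrable_of_abs_le hfm.aestronglyMeasurable hfb
    constructor
    · exact hint.integral_prod_left
    · rw [integral_integral_swap hint]
      refine integral_congr_ae (Filter.Eventually.of_forall fun x => ?_)
      exact keyA P X C hX hC hXC F₀ hF₀c hF₀ (Kb x) (hKbx x) M' (hKbb x)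
  set A : ℝ := ∫ x, ∫ y, Kb x y ∂lam ∂lam with hA
  set Cc : ℝ := ∫ x, ∫ y, Kb x y ∂lam ∂(alphaMeas u δ) with hCc
  have hJ : ∀ ω, Jker Kb (u, δ) (F₀ (min (X ω) (C ω)), decide (X ω ≤ C ω))
      = A - (∫ x, f ω x ∂lam) - Cc + (∫ x, f ω x ∂(alphaMeas u δ)) := by
    intro ω
    show pairIntDiff Kb lam (alphaMeas u δ) lam
      (alphaMeas (F₀ (min (X ω) (C ω))) (decide (X ω ≤ C ω))) = _
    rw [pairIntDiff, hA, hCc]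
  rw [integral_congr_ae (Filter.Eventually.of_forall hJ)]
  obtain ⟨hBint, hBval⟩ := main lam inferInstance
  obtain ⟨hDint, hDval⟩ := main (alphaMeas u δ) inferInstance
  have i1 : Integrable (fun ω => A - ∫ x, f ω x ∂lam) P := (integrable_const A).sub hBint
  have i2 : Integrable (fun ω => A - (∫ x, f ω x ∂lam) - Cc) P := i1.sub (integrable_const Cc)
  rw [integral_add i2 hDint, integral_sub i1 (integrable_const Cc),
    integral_sub (integrable_const A) hBint, integral_const, integral_const,
    probReal_univ, one_smul, one_smul, hBval, hDval]
  ring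
end

section
/- If (U₁,Δ₁) and (U₂,Δ₂) are independent, each distributed as (U,Δ) under the null hypothesis, then E[J((U₁,Δ₁),(U₂,Δ₂))] = 0. Consequently the U-statistic MMD_U = (n choose 2)⁻¹·Σ_{i<j} J((Uᵢ,Δᵢ),(Uⱼ,Δⱼ)) over an i.i.d. sample has expectation 0 = MMD²_K(λ, λ) under the null hypothesis, i.e. it is an unbiased estimator of the population squared MMD. -/
open MeasureTheory ProbabilityTheory Set Filter Topology Function

namespace UStatAux

/-- Explicit formula for the integral against `alphaMeas`. -/
noncomputable def aint (g : ℝ → ℝ) (q : ℝ × Bool) : ℝ :=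
  if q.2 then g q.1 else (1 / (1 - q.1)) * ∫ y in Set.Ioo q.1 1, g y

lemma integral_alphaMeas (g : ℝ → ℝ) (u : ℝ) (δ : Bool) :
    ∫ x, g x ∂(alphaMeas u δ) = aint g (u, δ) := by
  cases δ with
  | true => simp [alphaMeas, aint, integral_dirac]
  | false =>
    simp only [alphaMeas, aint, Bool.false_eq_true, if_false, integral_smul_measure]
    rcases lt_or_ge u 1 with h | h
    · have h0 : (0:ℝ) < 1 - u := by linarith
      rw [ENNReal.toReal_ofReal (by positivity)]
      rfl
    · rw [Set.Ioo_eq_empty (by linarith), Measure.restrict_empty]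
      simp

lemma alphaMeas_univ_le (u : ℝ) (δ : Bool) : alphaMeas u δ Set.univ ≤ 1 := by
  cases δ with
  | true => simp [alphaMeas]
  | false =>
    simp only [alphaMeas, Bool.false_eq_true, if_false, Measure.smul_apply,
      Measure.restrict_apply MeasurableSet.univ, Set.univ_inter, smul_eq_mul]
    rcases lt_or_ge u 1 with h | h
    · have h0 : (0:ℝ) < 1 - u := by linarith
      rw [Real.volume_Ioo, ← ENNReal.ofReal_mul (by positivity)]
      rw [one_div, inv_mul_cancel₀ (by linarith)]
      simp
    · rw [Set.Ioo_eq_empty (by linarith)]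
      simp

instance (u : ℝ) (δ : Bool) : IsFiniteMeasure (alphaMeas u δ) :=
  ⟨lt_of_le_of_lt (alphaMeas_univ_le u δ) (by norm_num)⟩

lemma aint_bound {g : ℝ → ℝ} {M : ℝ} (hg : Measurable g) (hgb : ∀ x, |g x| ≤ M) (q : ℝ × Bool) :
    |aint g q| ≤ M := by
  have hM : 0 ≤ M := le_trans (abs_nonneg _) (hgb 0)
  rcases q with ⟨u, δ⟩
  cases δ with
  | true => exact hgb u
  | false =>
    simp only [aint, Bool.false_eq_true, if_false]
    rcases lt_or_ge u 1 with h | h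
    · have h0 : (0:ℝ) < 1 - u := by linarith
      have h1 : |∫ y in Set.Ioo u 1, g y| ≤ M * (1 - u) := by
        have := norm_setIntegral_le_of_norm_le_const (μ := volume) (s := Set.Ioo u 1)
          (f := g) (C := M) (by rw [Real.volume_Ioo]; exact ENNReal.ofReal_lt_top)
          (fun x _ => hgb x)
        rwa [Real.volume_real_Ioo_of_le (by linarith), Real.norm_eq_abs] at this
      rw [abs_mul]
      have h2 : |1 / (1 - u)| = 1 / (1 - u) := abs_of_pos (by positivity)
      rw [h2]
      calc 1 / (1 - u) * |∫ y in Set.Ioo u 1, g y| ≤ 1 / (1 - u) * (M * (1 - u)) := by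
            apply mul_le_mul_of_nonneg_left h1 (by positivity)
        _ = M := by field_simp
    · rw [Set.Ioo_eq_empty (by linarith)]
      simp [hM]


lemma meas_param {α : Type*} [MeasurableSpace α] {f : α → ℝ → ℝ}
    (hf : Measurable (fun p : α × ℝ => f p.1 p.2)) :
    Measurable (fun p : α × ℝ => ∫ y in Set.Ioo p.2 1, f p.1 y) := by
  have h2 : (fun p : α × ℝ => ∫ y in Set.Ioo p.2 1, f p.1 y)
      = fun p => ∫ y, ((Set.Ioo p.2 1).indicator (f p.1)) y :=
    funext fun p => (integral_indicator measurableSet_Ioo).symm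
  rw [h2]
  have hF : StronglyMeasurable (fun z : (α × ℝ) × ℝ => (Set.Ioo z.1.2 1).indicator (f z.1.1) z.2) := by
    have he : (fun z : (α × ℝ) × ℝ => (Set.Ioo z.1.2 1).indicator (f z.1.1) z.2)
        = Set.indicator {z : (α × ℝ) × ℝ | z.1.2 < z.2 ∧ z.2 < 1} (fun z => f z.1.1 z.2) := by
      funext z
      simp only [Set.indicator_apply, Set.mem_Ioo, Set.mem_setOf_eq]
    rw [he]
    have hset : MeasurableSet {z : (α × ℝ) × ℝ | z.1.2 < z.2 ∧ z.2 < 1} :=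
      ((measurableSet_lt measurable_fst.snd measurable_snd).inter
        (measurableSet_lt measurable_snd measurable_const))
    exact ((hf.comp ((measurable_fst.fst).prodMk measurable_snd)).indicator hset).stronglyMeasurable
  exact hF.integral_prod_right'.measurable

lemma meas_param_set {α : Type*} [MeasurableSpace α] {f : α → ℝ → ℝ}
    (hf : Measurable (fun p : α × ℝ => f p.1 p.2)) {s : Set ℝ} (hs : MeasurableSet s) :
    Measurable (fun x : α => ∫ y in s, f x y) := by
  have h2 : (fun x : α => ∫ y in s, f x y) = fun x => ∫ y, (s.indicator (f x)) y :=
    funext fun x => (integral_indicator hs).symm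
  rw [h2]
  have hF : StronglyMeasurable (fun z : α × ℝ => s.indicator (f z.1) z.2) := by
    have he : (fun z : α × ℝ => s.indicator (f z.1) z.2)
        = Set.indicator {z : α × ℝ | z.2 ∈ s} (fun z => f z.1 z.2) := by
      funext z
      rfl
    rw [he]
    exact (hf.indicator (measurable_snd hs)).stronglyMeasurable
  exact hF.integral_prod_right'.measurable

lemma meas_aint_param {α : Type*} [MeasurableSpace α] {f : α → ℝ → ℝ}
    (hf : Measurable (fun p : α × ℝ => f p.1 p.2)) :
    Measurable (fun z : α × (ℝ × Bool) => aint (f z.1) z.2) := by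
  have hIoo : Measurable (fun z : α × (ℝ × Bool) => ∫ y in Set.Ioo z.2.1 1, f z.1 y) :=
    (meas_param hf).comp (f := fun z : α × (ℝ × Bool) => (z.1, z.2.1))
      (measurable_fst.prodMk measurable_snd.fst)
  unfold aint
  apply Measurable.ite
  · exact measurable_snd.snd (MeasurableSet.singleton true)
  · exact hf.comp (measurable_fst.prodMk measurable_snd.fst)
  · apply Measurable.mul
    · simp only [one_div]
      exact (measurable_const.sub measurable_snd.fst).inv
    · exact hIoo

lemma meas_aint {g : ℝ → ℝ} (hg : Measurable g) : Measurable (aint g) := by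
  have h := meas_aint_param (α := Unit) (f := fun _ y => g y) (hg.comp measurable_snd)
  exact h.comp (f := fun q : ℝ × Bool => (((), q) : Unit × (ℝ × Bool)))
    (measurable_const.prodMk measurable_id)


lemma map_restrict_Iic (μ : Measure ℝ) [IsProbabilityMeasure μ] (F : ℝ → ℝ)
    (hFc : Continuous F) (hF : ∀ t, F t = (μ (Iic t)).toReal) (c : ℝ) :
    (μ.restrict (Iic c)).map F = volume.restrict (Ioc 0 (F c)) := by
  have hFcdf : F = cdf μ := funext fun t => by rw [hF t, cdf_eq_real]; rfl
  have hmono : Monotone F := by rw [hFcdf]; exact monotone_cdf _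
  have hF0 : ∀ t, 0 ≤ F t := by rw [hFcdf]; exact fun t => cdf_nonneg _ t
  have hF1 : ∀ t, F t ≤ 1 := by rw [hFcdf]; exact fun t => cdf_le_one _ t
  have hIic : ∀ t, μ (Iic t) = ENNReal.ofReal (F t) := by
    intro t; rw [hFcdf]; exact (ofReal_cdf _ t).symm
  have htop : Tendsto F atTop (𝓝 1) := by rw [hFcdf]; exact tendsto_cdf_atTop _
  have hbot : Tendsto F atBot (𝓝 0) := by rw [hFcdf]; exact tendsto_cdf_atBot _
  have hkey : ∀ u : ℝ, u < 1 → μ {x | F x ≤ u} = ENNReal.ofReal u := by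
    intro u hu
    by_cases hne : {x | F x ≤ u}.Nonempty
    · obtain ⟨b, hb⟩ : ∃ b, u < F b := (htop.eventually_const_lt hu).exists
      have hbdd : BddAbove {x | F x ≤ u} := by
        refine ⟨b, fun x hx => ?_⟩
        by_contra hbx
        push_neg at hbx
        exact absurd (le_trans (hmono hbx.le) hx) (not_le.mpr hb)
      have hcl : IsClosed {x | F x ≤ u} := isClosed_Iic.preimage hFc
      set s := sSup {x | F x ≤ u} with hs
      have hsmem : F s ≤ u := hcl.csSup_mem hne hbdd
      have hSeq : {x | F x ≤ u} = Iic s :=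
        Set.ext fun x => ⟨fun hx => le_csSup hbdd hx, fun hx => le_trans (hmono hx) hsmem⟩
      have hFs : F s = u := by
        refine le_antisymm hsmem ?_
        by_contra hlt
        push_neg at hlt
        have hO : IsOpen (F ⁻¹' Iio u) := isOpen_Iio.preimage hFc
        obtain ⟨ε, hε, hball⟩ := Metric.isOpen_iff.mp hO s hlt
        have hx : s + ε/2 ∈ F ⁻¹' Iio u := by
          apply hball
          rw [Metric.mem_ball, Real.dist_eq]
          rw [abs_of_pos (by linarith)]
          linarith
        have : s + ε/2 ≤ s := le_csSup hbdd (show F (s + ε/2) ≤ u from le_of_lt hx)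
        linarith
      rw [hSeq, hIic, hFs]
    · rw [Set.not_nonempty_iff_eq_empty] at hne
      rw [hne, measure_empty]
      symm
      rw [ENNReal.ofReal_eq_zero]
      by_contra hpos
      push_neg at hpos
      obtain ⟨x, hx⟩ := (hbot.eventually_lt_const hpos).exists
      exact Set.eq_empty_iff_forall_notMem.mp hne x (le_of_lt hx)
  have hFm : Measurable F := hFc.measurable
  have : IsFiniteMeasure ((μ.restrict (Iic c)).map F) := by
    constructor
    rw [Measure.map_apply hFm MeasurableSet.univ]
    exact lt_of_le_of_lt (measure_mono (Set.subset_univ _)) (measure_lt_top _ _)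
  refine Measure.ext_of_Iic _ _ (fun u => ?_)
  rw [Measure.map_apply hFm measurableSet_Iic,
    Measure.restrict_apply (hFm measurableSet_Iic),
    Measure.restrict_apply measurableSet_Iic]
  rcases le_or_gt (F c) u with h | h
  · have hsub : Iic c ⊆ F ⁻¹' (Iic u) := fun x hx => le_trans (hmono hx) h
    have h2 : Iic u ∩ Ioc 0 (F c) = Ioc 0 (F c) :=
      Set.inter_eq_right.mpr (fun x hx => le_trans hx.2 h)
    rw [Set.inter_eq_right.mpr hsub, hIic, h2, Real.volume_Ioc, sub_zero]
  · have hsub : F ⁻¹' (Iic u) ⊆ Iic c := by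
      intro x hx
      by_contra hxc
      simp only [Set.mem_Iic, not_le] at hxc
      exact absurd (le_trans (hmono hxc.le) hx) (not_le.mpr h)
    rw [Set.inter_eq_left.mpr hsub]
    have h1 : Iic u ∩ Ioc 0 (F c) = Ioc 0 u := by
      rw [Set.inter_comm, Set.Ioc_inter_Iic, min_eq_right h.le]
    rw [h1, Real.volume_Ioc, sub_zero]
    exact hkey u (lt_of_lt_of_le h (hF1 c))


lemma measurable_decide_le {α : Type*} [MeasurableSpace α] {X C : α → ℝ}
    (hX : Measurable X) (hC : Measurable C) :
    Measurable (fun ω => decide (X ω ≤ C ω)) := by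
  apply measurable_to_countable'
  intro b
  cases b
  · have h : (fun ω => decide (X ω ≤ C ω)) ⁻¹' {false} = {ω | X ω ≤ C ω}ᶜ := by
      ext ω; simp
    rw [h]; exact (measurableSet_le hX hC).compl
  · have h : (fun ω => decide (X ω ≤ C ω)) ⁻¹' {true} = {ω | X ω ≤ C ω} := by
      ext ω; simp
    rw [h]; exact measurableSet_le hX hC

lemma core {Ω : Type*} [MeasurableSpace Ω] (P : Measure Ω) [IsProbabilityMeasure P]
    (X C : Ω → ℝ) (hX : Measurable X) (hC : Measurable C) (hXC : IndepFun X C P)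
    (F₀ : ℝ → ℝ) (hF₀c : Continuous F₀)
    (hF₀ : ∀ t : ℝ, F₀ t = (P {ω | X ω ≤ t}).toReal)
    (g : ℝ → ℝ) (M : ℝ) (hg : Measurable g) (hgb : ∀ x, |g x| ≤ M) :
    ∫ ω, aint g (F₀ (min (X ω) (C ω)), decide (X ω ≤ C ω)) ∂P
      = ∫ x in Ioc (0:ℝ) 1, g x := by
  set μX := P.map X with hμX
  set μC := P.map C with hμC
  have hPX : IsProbabilityMeasure μX := Measure.isProbabilityMeasure_map hX.aemeasurable
  have hPC : IsProbabilityMeasure μC := Measure.isProbabilityMeasure_map hC.aemeasurable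
  have hF : ∀ t, F₀ t = (μX (Iic t)).toReal := by
    intro t
    rw [hF₀ t, hμX, Measure.map_apply hX measurableSet_Iic]
    rfl
  have hF0 : ∀ t, 0 ≤ F₀ t := fun t => by rw [hF t]; exact ENNReal.toReal_nonneg
  have hF1 : ∀ t, F₀ t ≤ 1 := by
    intro t
    rw [hF t]
    exact ENNReal.toReal_le_of_le_ofReal zero_le_one (by simpa using prob_le_one)
  set φ : ℝ × ℝ → ℝ := fun z => if z.1 ≤ z.2 then g (F₀ z.1) else aint g (F₀ z.2, false)
    with hφ
  have hφpair : ∀ ω, aint g (F₀ (min (X ω) (C ω)), decide (X ω ≤ C ω)) = φ (X ω, C ω) := by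
    intro ω
    by_cases h : X ω ≤ C ω
    · simp [hφ, aint, h, min_eq_left h]
    · simp [hφ, aint, h, min_eq_right (le_of_not_ge h)]
  have hr : Measurable (fun a : ℝ => aint g (a, false)) :=
    (meas_aint hg).comp (measurable_id.prodMk measurable_const)
  have hφm : Measurable φ :=
    Measurable.ite (measurableSet_le measurable_fst measurable_snd)
      (hg.comp (hF₀c.measurable.comp measurable_fst))
      (hr.comp (hF₀c.measurable.comp measurable_snd))
  have hφb : ∀ z, |φ z| ≤ M := by
    intro z
    rw [hφ]
    by_cases h : z.1 ≤ z.2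
    · simpa [h] using hgb (F₀ z.1)
    · simpa [h] using aint_bound hg hgb (F₀ z.2, false)
  have step1 : ∫ ω, aint g (F₀ (min (X ω) (C ω)), decide (X ω ≤ C ω)) ∂P
      = ∫ ω, φ (X ω, C ω) ∂P := by
    exact integral_congr_ae (ae_of_all _ hφpair)
  have hpm : Measurable (fun ω => (X ω, C ω)) := hX.prodMk hC
  have step3 : P.map (fun ω => (X ω, C ω)) = μX.prod μC :=
    (indepFun_iff_map_prod_eq_prod_map_map hX.aemeasurable hC.aemeasurable).mp hXC
  have step2 : ∫ ω, φ (X ω, C ω) ∂P = ∫ z, φ z ∂(μX.prod μC) := by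
    rw [← step3, integral_map hpm.aemeasurable hφm.aestronglyMeasurable]
  have hint : Integrable φ (μX.prod μC) :=
    ⟨hφm.aestronglyMeasurable,
      HasFiniteIntegral.of_bounded (C := M) (ae_of_all _ fun z => by
        rw [Real.norm_eq_abs]; exact hφb z)⟩
  have step4 : ∫ z, φ z ∂(μX.prod μC) = ∫ c, ∫ x, φ (x, c) ∂μX ∂μC :=
    integral_prod_symm φ hint
  have step5 : ∀ c, ∫ x, φ (x, c) ∂μX = ∫ x in Ioc (0:ℝ) 1, g x := by
    intro c
    have hsplit : (fun x => φ (x, c))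
        = (Iic c).indicator (fun x => g (F₀ x)) + (Ioi c).indicator (fun _ => aint g (F₀ c, false)) := by
      funext x
      by_cases h : x ≤ c
      · simp [hφ, h, Set.indicator_apply, Set.mem_Iic, Set.mem_Ioi, not_lt.mpr h]
      · simp [hφ, h, Set.indicator_apply, Set.mem_Iic, Set.mem_Ioi, lt_of_not_ge h]
    have hint1 : Integrable ((Iic c).indicator (fun x => g (F₀ x))) μX := by
      refine (Integrable.indicator ?_ measurableSet_Iic)
      exact ⟨(hg.comp hF₀c.measurable).aestronglyMeasurable,
        HasFiniteIntegral.of_bounded (C := M) (ae_of_all _ fun x => by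
          rw [Real.norm_eq_abs]; exact hgb _)⟩
    have hint2 : Integrable ((Ioi c).indicator (fun _ : ℝ => aint g (F₀ c, false))) μX :=
      (integrable_const _).indicator measurableSet_Ioi
    rw [hsplit]
    rw [integral_add' hint1 hint2]
    have hterm1 : ∫ x, (Iic c).indicator (fun x => g (F₀ x)) x ∂μX
        = ∫ y in Ioc (0:ℝ) (F₀ c), g y := by
      rw [integral_indicator measurableSet_Iic]
      have := integral_map (μ := μX.restrict (Iic c)) hF₀c.measurable.aemeasurable
        (f := g) hg.aestronglyMeasurable
      rw [← this, map_restrict_Iic μX F₀ hF₀c hF c]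
    have hterm2 : ∫ x, (Ioi c).indicator (fun _ : ℝ => aint g (F₀ c, false)) x ∂μX
        = ∫ y in Ioc (F₀ c) 1, g y := by
      rw [integral_indicator measurableSet_Ioi, setIntegral_const]
      have hIoi : (μX (Ioi c)).toReal = 1 - F₀ c := by
        have h1 : μX (Ioi c) = 1 - μX (Iic c) := by
          rw [← Set.compl_Iic]
          exact prob_compl_eq_one_sub measurableSet_Iic
        rw [h1, ENNReal.toReal_sub_of_le prob_le_one ENNReal.one_ne_top]
        rw [ENNReal.toReal_one, hF c]
      rw [Measure.real, hIoi, smul_eq_mul]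
      rcases lt_or_eq_of_le (hF1 c) with h | h
      · have h0 : (0:ℝ) < 1 - F₀ c := by linarith
        simp only [aint, Bool.false_eq_true, if_false]
        rw [integral_Ioc_eq_integral_Ioo]
        field_simp
      · rw [h]
        simp [Set.Ioc_eq_empty (lt_irrefl (1:ℝ))]
    rw [hterm1, hterm2]
    have hIntOn : ∀ a b : ℝ, IntegrableOn g (Ioc a b) volume := by
      intro a b
      apply Measure.integrableOn_of_bounded (M := M)
      · exact ((Real.volume_Ioc (a := a) (b := b)) ▸ ENNReal.ofReal_lt_top).ne
      · exact hg.aestronglyMeasurable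
      · exact ae_of_all _ fun x => by rw [Real.norm_eq_abs]; exact hgb x
    rw [← setIntegral_union (Set.Ioc_disjoint_Ioc_of_le le_rfl) measurableSet_Ioc
      (hIntOn 0 (F₀ c)) (hIntOn (F₀ c) 1),
      Set.Ioc_union_Ioc_eq_Ioc (hF0 c) (hF1 c)]
  rw [step1, step2, step4]
  rw [integral_congr_ae (ae_of_all _ step5)]
  simp

lemma core_map {Ω : Type*} [MeasurableSpace Ω] (P : Measure Ω) [IsProbabilityMeasure P]
    (X C : Ω → ℝ) (hX : Measurable X) (hC : Measurable C) (hXC : IndepFun X C P)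
    (F₀ : ℝ → ℝ) (hF₀c : Continuous F₀)
    (hF₀ : ∀ t : ℝ, F₀ t = (P {ω | X ω ≤ t}).toReal)
    (g : ℝ → ℝ) (M : ℝ) (hg : Measurable g) (hgb : ∀ x, |g x| ≤ M) :
    ∫ q, aint g q ∂(P.map (fun ω => (F₀ (min (X ω) (C ω)), decide (X ω ≤ C ω))))
      = ∫ x in Ioc (0:ℝ) 1, g x := by
  have hpm : Measurable (fun ω => (F₀ (min (X ω) (C ω)), decide (X ω ≤ C ω))) :=
    (hF₀c.measurable.comp (hX.min hC)).prodMk (measurable_decide_le hX hC)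
  rw [integral_map hpm.aemeasurable (meas_aint hg).aestronglyMeasurable]
  exact core P X C hX hC hXC F₀ hF₀c hF₀ g M hg hgb


lemma Jker_eq (K : ℝ → ℝ → ℝ) (p q : ℝ × Bool) :
    Jker K p q = (∫ x in Icc (0:ℝ) 1, ∫ y in Icc (0:ℝ) 1, K x y)
      - (∫ x in Icc (0:ℝ) 1, aint (K x) q)
      - aint (fun x => ∫ y in Icc (0:ℝ) 1, K x y) p
      + aint (fun x => aint (K x) q) p := by
  have e1 : ∀ x, ∫ y, K x y ∂(alphaMeas q.1 q.2) = aint (K x) q := by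
    intro x; exact integral_alphaMeas (K x) q.1 q.2
  have e2 : ∫ x, (∫ y in Icc (0:ℝ) 1, K x y) ∂(alphaMeas p.1 p.2)
      = aint (fun x => ∫ y in Icc (0:ℝ) 1, K x y) p :=
    integral_alphaMeas _ p.1 p.2
  have e3 : ∫ x, (∫ y, K x y ∂(alphaMeas q.1 q.2)) ∂(alphaMeas p.1 p.2)
      = aint (fun x => aint (K x) q) p := by
    simp_rw [e1]
    exact integral_alphaMeas _ p.1 p.2
  unfold Jker pairIntDiff
  rw [e2, e3]
  have eB : ∫ x in Icc (0:ℝ) 1, ∫ y, K x y ∂(alphaMeas q.1 q.2)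
      = ∫ x in Icc (0:ℝ) 1, aint (K x) q :=
    setIntegral_congr_fun measurableSet_Icc (fun x _ => e1 x)
  rw [eB]

lemma meas_Jker {K : ℝ → ℝ → ℝ} (hK : Measurable (Function.uncurry K)) :
    Measurable (fun z : (ℝ × Bool) × (ℝ × Bool) => Jker K z.1 z.2) := by
  have h1 : Measurable (fun w : (ℝ × Bool) × ℝ => aint (K w.2) w.1) :=
    (meas_aint_param (f := K) hK).comp (measurable_snd.prodMk measurable_fst)
  have h2 : Measurable (fun q : ℝ × Bool => ∫ x in Icc (0:ℝ) 1, aint (K x) q) :=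
    meas_param_set (f := fun q x => aint (K x) q) h1 measurableSet_Icc
  have hG : Measurable (fun x : ℝ => ∫ y in Icc (0:ℝ) 1, K x y) :=
    meas_param_set (f := K) hK measurableSet_Icc
  have h3 := meas_aint_param (α := ℝ × Bool) (f := fun q x => aint (K x) q) h1
  simp only [Jker_eq]
  apply Measurable.add
  · apply Measurable.sub
    · exact (measurable_const.sub (h2.comp measurable_snd))
    · exact (meas_aint hG).comp measurable_fst
  · exact h3.comp (measurable_snd.prodMk measurable_fst)

lemma norm_setIntegral_Icc_le {f : ℝ → ℝ} {M : ℝ} (hf : Measurable f)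
    (hfb : ∀ x, |f x| ≤ M) : |∫ x in Icc (0:ℝ) 1, f x| ≤ M := by
  have h := norm_setIntegral_le_of_norm_le_const (μ := volume) (s := Icc (0:ℝ) 1) (f := f) (C := M)
    (by rw [Real.volume_Icc]; exact ENNReal.ofReal_lt_top) (fun x _ => hfb x)
  rw [Real.volume_real_Icc_of_le zero_le_one, Real.norm_eq_abs] at h
  simpa using h

lemma Jker_bound {K : ℝ → ℝ → ℝ} (hK : Measurable (Function.uncurry K)) {M : ℝ}
    (hKb : ∀ x y, |K x y| ≤ M) (p q : ℝ × Bool) : |Jker K p q| ≤ 4 * M := by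
  have hKx : ∀ x, Measurable (K x) := fun x => hK.comp measurable_prodMk_left
  have h1 : Measurable (fun w : (ℝ × Bool) × ℝ => aint (K w.2) w.1) :=
    (meas_aint_param (f := K) hK).comp (measurable_snd.prodMk measurable_fst)
  have hG : Measurable (fun x : ℝ => ∫ y in Icc (0:ℝ) 1, K x y) :=
    meas_param_set (f := K) hK measurableSet_Icc
  have haq : Measurable (fun x : ℝ => aint (K x) q) :=
    h1.comp (measurable_const.prodMk measurable_id)
  have hGb : ∀ x, |∫ y in Icc (0:ℝ) 1, K x y| ≤ M :=
    fun x => norm_setIntegral_Icc_le (hKx x) (hKb x)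
  have haqb : ∀ x, |aint (K x) q| ≤ M := fun x => aint_bound (hKx x) (hKb x) q
  have b1 : |∫ x in Icc (0:ℝ) 1, ∫ y in Icc (0:ℝ) 1, K x y| ≤ M :=
    norm_setIntegral_Icc_le hG hGb
  have b2 : |∫ x in Icc (0:ℝ) 1, aint (K x) q| ≤ M := norm_setIntegral_Icc_le haq haqb
  have b3 : |aint (fun x => ∫ y in Icc (0:ℝ) 1, K x y) p| ≤ M := aint_bound hG hGb p
  have b4 : |aint (fun x => aint (K x) q) p| ≤ M := aint_bound haq haqb p
  rw [Jker_eq]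
  calc |(∫ x in Icc (0:ℝ) 1, ∫ y in Icc (0:ℝ) 1, K x y) - (∫ x in Icc (0:ℝ) 1, aint (K x) q)
      - aint (fun x => ∫ y in Icc (0:ℝ) 1, K x y) p + aint (fun x => aint (K x) q) p|
      ≤ |(∫ x in Icc (0:ℝ) 1, ∫ y in Icc (0:ℝ) 1, K x y) - (∫ x in Icc (0:ℝ) 1, aint (K x) q)
      - aint (fun x => ∫ y in Icc (0:ℝ) 1, K x y) p| + |aint (fun x => aint (K x) q) p| :=
        abs_add_le _ _
    _ ≤ |(∫ x in Icc (0:ℝ) 1, ∫ y in Icc (0:ℝ) 1, K x y) - (∫ x in Icc (0:ℝ) 1, aint (K x) q)|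
        + |aint (fun x => ∫ y in Icc (0:ℝ) 1, K x y) p| + |aint (fun x => aint (K x) q) p| := by
        have := abs_sub ((∫ x in Icc (0:ℝ) 1, ∫ y in Icc (0:ℝ) 1, K x y)
          - (∫ x in Icc (0:ℝ) 1, aint (K x) q)) (aint (fun x => ∫ y in Icc (0:ℝ) 1, K x y) p)
        linarith
    _ ≤ 4 * M := by
        have := abs_sub (∫ x in Icc (0:ℝ) 1, ∫ y in Icc (0:ℝ) 1, K x y)
          (∫ x in Icc (0:ℝ) 1, aint (K x) q)
        linarith

instance : IsFiniteMeasure (volume.restrict (Icc (0:ℝ) 1)) := by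
  constructor
  rw [Measure.restrict_apply_univ, Real.volume_Icc]
  exact ENNReal.ofReal_lt_top

lemma main_integral (ν : Measure (ℝ × Bool)) [IsProbabilityMeasure ν]
    (K : ℝ → ℝ → ℝ) (hK : Measurable (Function.uncurry K)) (M : ℝ)
    (hKb : ∀ x y, |K x y| ≤ M)
    (hν : ∀ g : ℝ → ℝ, Measurable g → (∀ x, |g x| ≤ M) →
      ∫ q, aint g q ∂ν = ∫ x in Ioc (0:ℝ) 1, g x) :
    ∫ z : (ℝ × Bool) × (ℝ × Bool), Jker K z.1 z.2 ∂(ν.prod ν) = 0 := by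
  have hM : 0 ≤ M := le_trans (abs_nonneg _) (hKb 0 0)
  have hKx : ∀ x, Measurable (K x) := fun x => hK.comp measurable_prodMk_left
  have h1 : Measurable (fun w : (ℝ × Bool) × ℝ => aint (K w.2) w.1) :=
    (meas_aint_param (f := K) hK).comp (measurable_snd.prodMk measurable_fst)
  have h1' : Measurable (fun w : ℝ × (ℝ × Bool) => aint (K w.1) w.2) :=
    meas_aint_param (f := K) hK
  have h2 : Measurable (fun q : ℝ × Bool => ∫ x in Icc (0:ℝ) 1, aint (K x) q) :=
    meas_param_set (f := fun q x => aint (K x) q) h1 measurableSet_Icc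
  have hG : Measurable (fun x : ℝ => ∫ y in Icc (0:ℝ) 1, K x y) :=
    meas_param_set (f := K) hK measurableSet_Icc
  have h3 := meas_aint_param (α := ℝ × Bool) (f := fun q x => aint (K x) q) h1
  have hJm := meas_Jker hK
  have hJint : Integrable (fun z : (ℝ × Bool) × (ℝ × Bool) => Jker K z.1 z.2) (ν.prod ν) :=
    ⟨hJm.aestronglyMeasurable, HasFiniteIntegral.of_bounded (C := 4 * M)
      (ae_of_all _ fun z => by rw [Real.norm_eq_abs]; exact Jker_bound hK hKb z.1 z.2)⟩
  rw [integral_prod _ hJint]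
  have hinner : ∀ p : ℝ × Bool, ∫ q, Jker K p q ∂ν = 0 := by
    intro p
    simp only [Jker_eq]
    have haqb : ∀ q x, |aint (K x) q| ≤ M := fun q x => aint_bound (hKx x) (hKb x) q
    have i1 : Integrable (fun q : ℝ × Bool => ∫ x in Icc (0:ℝ) 1, aint (K x) q) ν :=
      ⟨h2.aestronglyMeasurable, HasFiniteIntegral.of_bounded (C := M)
        (ae_of_all _ fun q => by
          rw [Real.norm_eq_abs]
          exact norm_setIntegral_Icc_le (h1.comp (measurable_const.prodMk measurable_id))
            (haqb q))⟩
    have i2m : Measurable (fun q : ℝ × Bool => aint (fun x => aint (K x) q) p) :=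
      h3.comp (measurable_id.prodMk measurable_const)
    have i2 : Integrable (fun q : ℝ × Bool => aint (fun x => aint (K x) q) p) ν :=
      ⟨i2m.aestronglyMeasurable, HasFiniteIntegral.of_bounded (C := M)
        (ae_of_all _ fun q => by
          rw [Real.norm_eq_abs]
          exact aint_bound (h1.comp (measurable_const.prodMk measurable_id)) (haqb q) p)⟩
    have hT2 : ∫ q, (∫ x in Icc (0:ℝ) 1, aint (K x) q) ∂ν
        = ∫ x in Icc (0:ℝ) 1, ∫ y in Icc (0:ℝ) 1, K x y := by
      have hsw : Integrable (Function.uncurry (fun x (q : ℝ × Bool) => aint (K x) q))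
          ((volume.restrict (Icc (0:ℝ) 1)).prod ν) :=
        ⟨h1'.aestronglyMeasurable, HasFiniteIntegral.of_bounded (C := M)
          (ae_of_all _ fun w => by rw [Real.norm_eq_abs]; exact haqb w.2 w.1)⟩
      rw [← integral_integral_swap hsw]
      refine setIntegral_congr_fun measurableSet_Icc (fun x _ => ?_)
      rw [hν (K x) (hKx x) (hKb x), integral_Icc_eq_integral_Ioc]
    have hT4 : ∫ q, aint (fun x => aint (K x) q) p ∂ν
        = aint (fun x => ∫ y in Icc (0:ℝ) 1, K x y) p := by
      have e4 : ∀ q : ℝ × Bool, aint (fun x => aint (K x) q) p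
          = ∫ x, aint (K x) q ∂(alphaMeas p.1 p.2) :=
        fun q => (integral_alphaMeas _ p.1 p.2).symm
      simp_rw [e4]
      have hsw : Integrable (Function.uncurry (fun x (q : ℝ × Bool) => aint (K x) q))
          ((alphaMeas p.1 p.2).prod ν) :=
        ⟨h1'.aestronglyMeasurable, HasFiniteIntegral.of_bounded (C := M)
          (ae_of_all _ fun w => by rw [Real.norm_eq_abs]; exact haqb w.2 w.1)⟩
      rw [← integral_integral_swap hsw]
      have heq : ∀ x, ∫ q, aint (K x) q ∂ν = ∫ y in Icc (0:ℝ) 1, K x y := by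
        intro x
        rw [hν (K x) (hKx x) (hKb x), integral_Icc_eq_integral_Ioc]
      simp_rw [heq]
      exact integral_alphaMeas _ p.1 p.2
    set A := ∫ x in Icc (0:ℝ) 1, ∫ y in Icc (0:ℝ) 1, K x y with hA
    set T3 := aint (fun x => ∫ y in Icc (0:ℝ) 1, K x y) p with hT3def
    have hrw : (fun q : ℝ × Bool => A - (∫ x in Icc (0:ℝ) 1, aint (K x) q) - T3
          + aint (fun x => aint (K x) q) p)
        = fun q : ℝ × Bool => ((A - T3) - (∫ x in Icc (0:ℝ) 1, aint (K x) q))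
          + aint (fun x => aint (K x) q) p := by
      funext q; ring
    have ic : Integrable (fun q : ℝ × Bool =>
        (A - T3) - ∫ x in Icc (0:ℝ) 1, aint (K x) q) ν := (integrable_const _).sub i1
    rw [hrw, integral_add ic i2, integral_sub (integrable_const _) i1, integral_const]
    rw [hT2, hT4]
    simp only [measure_univ, ENNReal.toReal_one, one_smul, probReal_univ]
    ring
  rw [integral_congr_ae (ae_of_all _ hinner)]
  simp


lemma aint_congr_on {f g : ℝ → ℝ} {p : ℝ × Bool} (hp : p.1 ∈ Icc (0:ℝ) 1)
    (h : ∀ x ∈ Icc (0:ℝ) 1, f x = g x) : aint f p = aint g p := by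
  rcases p with ⟨u, δ⟩
  cases δ with
  | true => exact h u hp
  | false =>
    simp only [aint, Bool.false_eq_true, if_false]
    congr 1
    refine setIntegral_congr_fun measurableSet_Ioo (fun y hy => ?_)
    exact h y ⟨le_of_lt (lt_of_le_of_lt hp.1 hy.1), hy.2.le⟩

lemma Jker_congr {K K' : ℝ → ℝ → ℝ}
    (hKK' : ∀ x ∈ Icc (0:ℝ) 1, ∀ y ∈ Icc (0:ℝ) 1, K x y = K' x y)
    {p q : ℝ × Bool} (hp : p.1 ∈ Icc (0:ℝ) 1) (hq : q.1 ∈ Icc (0:ℝ) 1) :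
    Jker K p q = Jker K' p q := by
  rw [Jker_eq, Jker_eq]
  have hA : ∫ x in Icc (0:ℝ) 1, ∫ y in Icc (0:ℝ) 1, K x y
      = ∫ x in Icc (0:ℝ) 1, ∫ y in Icc (0:ℝ) 1, K' x y :=
    setIntegral_congr_fun measurableSet_Icc (fun x hx =>
      setIntegral_congr_fun measurableSet_Icc (fun y hy => hKK' x hx y hy))
  have hT2 : ∫ x in Icc (0:ℝ) 1, aint (K x) q = ∫ x in Icc (0:ℝ) 1, aint (K' x) q :=
    setIntegral_congr_fun measurableSet_Icc (fun x hx =>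
      aint_congr_on hq (fun y hy => hKK' x hx y hy))
  have hT3 : aint (fun x => ∫ y in Icc (0:ℝ) 1, K x y) p
      = aint (fun x => ∫ y in Icc (0:ℝ) 1, K' x y) p :=
    aint_congr_on hp (fun x hx =>
      setIntegral_congr_fun measurableSet_Icc (fun y hy => hKK' x hx y hy))
  have hT4 : aint (fun x => aint (K x) q) p = aint (fun x => aint (K' x) q) p :=
    aint_congr_on hp (fun x hx => aint_congr_on hq (fun y hy => hKK' x hx y hy))
  rw [hA, hT2, hT3, hT4]

end UStatAux

open UStatAux in
/-- For an i.i.d. sample `(U₁,Δ₁), …, (Uₙ,Δₙ)` distributed as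
`(U,Δ)` under the null hypothesis, `E[J((Uᵢ,Δᵢ),(Uⱼ,Δⱼ))] = 0` for `i ≠ j`;
consequently the U-statistic `MMD_U = (n choose 2)⁻¹ Σ_{i<j} J((Uᵢ,Δᵢ),(Uⱼ,Δⱼ))`
has expectation `0 = MMD²_K(λ,λ)`, i.e. it is unbiased under the null. -/
theorem ustatistic_unbiased_under_null
    {Ω Ω' : Type*} [MeasurableSpace Ω] [MeasurableSpace Ω']
    (P : Measure Ω) [IsProbabilityMeasure P]
    (P' : Measure Ω') [IsProbabilityMeasure P']
    (X C : Ω → ℝ) (hX : Measurable X) (hC : Measurable C)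
    (hXC : IndepFun X C P)
    (F₀ : ℝ → ℝ) (hF₀c : Continuous F₀)
    (hF₀ : ∀ t : ℝ, F₀ t = (P {ω | X ω ≤ t}).toReal)
    (K : ℝ → ℝ → ℝ) (hK : Measurable (Function.uncurry K))
    (hKb : ∃ M : ℝ, ∀ x ∈ Set.Icc (0:ℝ) 1, ∀ y ∈ Set.Icc (0:ℝ) 1, |K x y| ≤ M)
    (n : ℕ) (hn : 2 ≤ n) (W : Fin n → Ω' → ℝ × Bool)
    (hWm : ∀ i, Measurable (W i))
    (hWindep : iIndepFun W P')
    (hWdist : ∀ i, IdentDistrib (W i)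
      (fun ω => (F₀ (min (X ω) (C ω)), decide (X ω ≤ C ω))) P' P) :
    (∀ i j : Fin n, i ≠ j → ∫ ω, Jker K (W i ω) (W j ω) ∂P' = 0)
    ∧ ∫ ω, ((n.choose 2 : ℝ))⁻¹
        * ∑ p ∈ Finset.univ.filter (fun p : Fin n × Fin n => p.1 < p.2),
            Jker K (W p.1 ω) (W p.2 ω) ∂P' = 0 := by
  obtain ⟨M, hM⟩ := hKb
  have hM0 : 0 ≤ M := le_trans (abs_nonneg _)
    (hM 0 (by simp) 0 (by simp))
  -- truncated kernel
  set K' : ℝ → ℝ → ℝ := fun x y =>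
    if x ∈ Icc (0:ℝ) 1 ∧ y ∈ Icc (0:ℝ) 1 then K x y else 0 with hK'def
  have hKK' : ∀ x ∈ Icc (0:ℝ) 1, ∀ y ∈ Icc (0:ℝ) 1, K x y = K' x y := by
    intro x hx y hy
    exact (if_pos ⟨hx, hy⟩).symm
  have hK'm : Measurable (Function.uncurry K') := by
    have : Function.uncurry K' = fun z : ℝ × ℝ =>
        if z.1 ∈ Icc (0:ℝ) 1 ∧ z.2 ∈ Icc (0:ℝ) 1 then Function.uncurry K z else 0 := rfl
    rw [this]
    exact Measurable.ite ((measurable_fst measurableSet_Icc).inter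
      (measurable_snd measurableSet_Icc)) hK measurable_const
  have hK'b : ∀ x y, |K' x y| ≤ M := by
    intro x y
    by_cases h : x ∈ Icc (0:ℝ) 1 ∧ y ∈ Icc (0:ℝ) 1
    · rw [hK'def]; simp only [h, if_true]; exact hM x h.1 y h.2
    · rw [hK'def]; simp only [h, if_false, abs_zero]; exact hM0
  -- the null distribution on ℝ × Bool
  have hpairm : Measurable (fun ω => (F₀ (min (X ω) (C ω)), decide (X ω ≤ C ω))) :=
    (hF₀c.measurable.comp (hX.min hC)).prodMk (measurable_decide_le hX hC)
  set ρ : Measure (ℝ × Bool) :=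
    P.map (fun ω => (F₀ (min (X ω) (C ω)), decide (X ω ≤ C ω))) with hρ
  have hρprob : IsProbabilityMeasure ρ := Measure.isProbabilityMeasure_map hpairm.aemeasurable
  have hν : ∀ g : ℝ → ℝ, Measurable g → (∀ x, |g x| ≤ M) →
      ∫ q, aint g q ∂ρ = ∫ x in Ioc (0:ℝ) 1, g x :=
    fun g hg hgb => core_map P X C hX hC hXC F₀ hF₀c hF₀ g M hg hgb
  have hmain : ∫ z : (ℝ × Bool) × (ℝ × Bool), Jker K' z.1 z.2 ∂(ρ.prod ρ) = 0 :=
    main_integral ρ K' hK'm M hK'b hν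
  -- a.e. the first coordinate is in [0,1]
  have hF01 : ∀ t, F₀ t ∈ Icc (0:ℝ) 1 := by
    intro t
    constructor
    · rw [hF₀ t]; exact ENNReal.toReal_nonneg
    · rw [hF₀ t]
      exact ENNReal.toReal_le_of_le_ofReal zero_le_one (by simpa using prob_le_one)
  have hSbad : MeasurableSet {q : ℝ × Bool | q.1 ∉ Icc (0:ℝ) 1} :=
    (measurable_fst measurableSet_Icc).compl
  have hae : ∀ i, ∀ᵐ ω ∂P', (W i ω).1 ∈ Icc (0:ℝ) 1 := by
    intro i
    have h0 : P' (W i ⁻¹' {q : ℝ × Bool | q.1 ∉ Icc (0:ℝ) 1}) = 0 := by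
      rw [← Measure.map_apply (hWm i) hSbad, (hWdist i).map_eq,
        Measure.map_apply hpairm hSbad]
      have : (fun ω => (F₀ (min (X ω) (C ω)), decide (X ω ≤ C ω))) ⁻¹'
          {q : ℝ × Bool | q.1 ∉ Icc (0:ℝ) 1} = ∅ := by
        ext ω
        simp only [Set.mem_preimage, Set.mem_setOf_eq, Set.mem_empty_iff_false, iff_false,
          not_not]
        exact hF01 _
      rw [this, measure_empty]
    rw [ae_iff]
    have heq : {ω | ¬ (W i ω).1 ∈ Icc (0:ℝ) 1}
        = W i ⁻¹' {q : ℝ × Bool | q.1 ∉ Icc (0:ℝ) 1} := rfl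
    rw [heq]
    exact h0
  -- part 1
  have part1 : ∀ i j : Fin n, i ≠ j → ∫ ω, Jker K (W i ω) (W j ω) ∂P' = 0 := by
    intro i j hij
    have haeij : ∀ᵐ ω ∂P',
        Jker K (W i ω) (W j ω) = Jker K' (W i ω) (W j ω) := by
      filter_upwards [hae i, hae j] with ω h1 h2
      exact Jker_congr hKK' h1 h2
    rw [integral_congr_ae haeij]
    have hmapij : P'.map (fun ω => (W i ω, W j ω)) = ρ.prod ρ := by
      rw [(indepFun_iff_map_prod_eq_prod_map_map (hWm i).aemeasurable
        (hWm j).aemeasurable).mp (hWindep.indepFun hij),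
        (hWdist i).map_eq, (hWdist j).map_eq, hρ]
    rw [← hmapij] at hmain
    rw [integral_map ((hWm i).prodMk (hWm j)).aemeasurable
      (meas_Jker hK'm).aestronglyMeasurable] at hmain
    exact hmain
  refine ⟨part1, ?_⟩
  -- part 2
  have hint : ∀ i j : Fin n, i ≠ j →
      Integrable (fun ω => Jker K (W i ω) (W j ω)) P' := by
    intro i j hij
    have hint' : Integrable (fun ω => Jker K' (W i ω) (W j ω)) P' :=
      ⟨((meas_Jker hK'm).comp ((hWm i).prodMk (hWm j))).aestronglyMeasurable,
        HasFiniteIntegral.of_bounded (C := 4 * M) (ae_of_all _ fun ω => by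
          rw [Real.norm_eq_abs]; exact Jker_bound hK'm hK'b _ _)⟩
    apply hint'.congr
    filter_upwards [hae i, hae j] with ω h1 h2
    exact (Jker_congr hKK' h1 h2).symm
  rw [integral_const_mul]
  rw [integral_finset_sum _ (fun p hp => hint p.1 p.2
    (ne_of_lt (Finset.mem_filter.mp hp).2))]
  rw [Finset.sum_congr rfl (fun p hp => part1 p.1 p.2
    (ne_of_lt (Finset.mem_filter.mp hp).2))]
  simp
end
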